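/- arXiv:1708.05188 — 5 statements merged into one kernel-verified Lean document; each statement's English description precedes it below -/
import Mathlib

section
/- The diameter of the Hasse diagram of the lattice NC(n) of non-crossing partitions of {1,...,n} is n-1. -/
/-- A partition of `{1,...,n}` (modeled as a setoid on `Fin n`) is non-crossing. -/
def IsNoncrossing {n : ℕ} (s : Setoid (Fin n)) : Prop :=
  ∀ a b c d : Fin n, a < b → b < c → c < d → s.r a c → s.r b d → s.r a b

/-- `NC n`: the set of non-crossing partitions of `{1,...,n}`, ordered by reverse
refinement (the order induced from the refinement order on setoids). -/
abbrev NC (n : ℕ) := {s : Setoid (Fin n) // IsNoncrossing s}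

/-- The number of blocks of a partition. -/
noncomputable def blocks {n : ℕ} (s : Setoid (Fin n)) : ℕ := Nat.card (Quotient s)

/-- The Hasse diagram of `NC n`: vertices are non-crossing partitions, edges join
pairs where one covers the other. -/
def hasse (n : ℕ) : SimpleGraph (NC n) where
  Adj x y := x ⋖ y ∨ y ⋖ x
  symm := ⟨fun _ _ h => h.symm⟩
  loopless := ⟨fun x h => lt_irrefl x (h.elim CovBy.lt CovBy.lt)⟩

section Aux
variable {n : ℕ}

def qmap {s t : Setoid (Fin n)} (h : s ≤ t) : Quotient s → Quotient t :=
  Quotient.lift (fun a => Quotient.mk t a) (fun _ _ hab => Quotient.sound (h hab))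

lemma qmap_surj {s t : Setoid (Fin n)} (h : s ≤ t) : Function.Surjective (qmap h) := by
  intro q
  obtain ⟨a, rfl⟩ := Quotient.exists_rep q
  exact ⟨Quotient.mk s a, rfl⟩

lemma blocks_anti {s t : Setoid (Fin n)} (h : s ≤ t) : blocks t ≤ blocks s :=
  Nat.card_le_card_of_surjective (qmap h) (qmap_surj h)

lemma eq_of_le_blocks_le {s t : Setoid (Fin n)} (h : s ≤ t) (hb : blocks s ≤ blocks t) :
    s = t := by
  have hcard : Nat.card (Quotient s) = Nat.card (Quotient t) :=
    le_antisymm hb (blocks_anti h)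
  have hbij : Function.Bijective (qmap h) :=
    (Nat.bijective_iff_surjective_and_card (qmap h)).mpr ⟨qmap_surj h, hcard⟩
  ext a b
  constructor
  · exact fun hab => h hab
  · intro hab
    have : qmap h (Quotient.mk s a) = qmap h (Quotient.mk s b) := Quotient.sound hab
    exact Quotient.exact (hbij.injective this)

lemma merge {x y : Setoid (Fin n)} (hx : IsNoncrossing x) (hy : IsNoncrossing y)
    (hle : x ≤ y) (hne : x ≠ y) :
    ∃ z : Setoid (Fin n), IsNoncrossing z ∧ x ≤ z ∧ z ≤ y ∧ x ≠ z ∧ blocks z + 1 = blocks x := by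
  classical
  -- find a pair related in y but not in x
  obtain ⟨a0, b0, hyab, hxab⟩ : ∃ a b, y a b ∧ ¬ x a b := by
    by_contra hcon
    push_neg at hcon
    exact hne (le_antisymm hle fun a b h => hcon a b h)
  -- m : the minimum of the y-class C of a0
  set C : Finset (Fin n) := Finset.univ.filter (fun t => y t a0) with hC
  have ha0C : a0 ∈ C := by simp [hC, y.refl']
  set m : Fin n := C.min' ⟨a0, ha0C⟩ with hm
  have hmC : y m a0 := by
    have := C.min'_mem ⟨a0, ha0C⟩
    simpa [hC] using this
  have hm_min : ∀ t, y t a0 → m ≤ t := by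
    intro t ht
    exact C.min'_le t (by simp [hC, ht])
  -- w : the minimum of C minus the x-class of m
  set D : Finset (Fin n) := Finset.univ.filter (fun t => y t a0 ∧ ¬ x t m) with hD
  have hDne : D.Nonempty := by
    by_cases h0 : x a0 m
    · refine ⟨b0, ?_⟩
      simp only [hD, Finset.mem_filter, Finset.mem_univ, true_and]
      exact ⟨y.symm' hyab, fun hb => hxab (x.trans' h0 (x.symm' hb))⟩
    · exact ⟨a0, by simp [hD, y.refl', h0]⟩
  set w : Fin n := D.min' hDne with hwdef
  have hwC : y w a0 := by
    have := D.min'_mem hDne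
    simp [hD] at this
    exact this.1
  have hwm : ¬ x w m := by
    have := D.min'_mem hDne
    simp [hD] at this
    exact this.2
  have hw_min : ∀ t, y t a0 → ¬ x t m → w ≤ t := by
    intro t ht ht'
    exact D.min'_le t (by simp [hD, ht, ht'])
  -- the merged "class" predicate
  set M : Fin n → Prop := fun t => x t m ∨ x t w with hM
  have Mtrans : ∀ {p q}, x p q → M q → M p := by
    intro p q h hq
    exact hq.elim (fun h2 => Or.inl (x.trans' h h2)) (fun h2 => Or.inr (x.trans' h h2))
  have MC : ∀ {t}, M t → y t a0 := by
    intro t ht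
    exact ht.elim (fun h => y.trans' (hle h) hmC) (fun h => y.trans' (hle h) hwC)
  have hMm : M m := Or.inl (x.refl' m)
  have hMw : M w := Or.inr (x.refl' w)
  -- key: an element of C not in M is strictly above both m and w
  have key : ∀ {t}, y t a0 → ¬ M t → m < t ∧ w < t := by
    intro t ht hMt
    have hxm : ¬ x t m := fun h => hMt (Or.inl h)
    have h1 : m ≤ t := hm_min t ht
    have h2 : w ≤ t := hw_min t ht hxm
    refine ⟨lt_of_le_of_ne h1 ?_, lt_of_le_of_ne h2 ?_⟩
    · rintro rfl; exact hMt hMm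
    · rintro rfl; exact hMt hMw
  -- Claim A
  have claimA : ∀ q1 q2 q3 q4 : Fin n, q1 < q2 → q2 < q3 → q3 < q4 →
      M q1 → M q3 → x q2 q4 → M q2 := by
    intro q1 q2 q3 q4 h12 h23 h34 hM1 hM3 hx24
    have hy13 : y q1 q3 := y.trans' (MC hM1) (y.symm' (MC hM3))
    have hy12 : y q1 q2 := hy q1 q2 q3 q4 h12 h23 h34 hy13 (hle hx24)
    have h2C : y q2 a0 := y.trans' (y.symm' hy12) (MC hM1)
    by_contra hM2
    obtain ⟨hm2, hw2⟩ := key h2C hM2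
    rcases hM3 with h3m | h3w
    · exact hM2 (Or.inl (x.symm' (hx m q2 q3 q4 hm2 h23 h34 (x.symm' h3m) hx24)))
    · exact hM2 (Or.inr (x.symm' (hx w q2 q3 q4 hw2 h23 h34 (x.symm' h3w) hx24)))
  -- Claim B
  have claimB : ∀ q1 q2 q3 q4 : Fin n, q1 < q2 → q2 < q3 → q3 < q4 →
      x q1 q3 → M q2 → M q4 → M q3 := by
    intro q1 q2 q3 q4 h12 h23 h34 hx13 hM2 hM4
    have hy24 : y q2 q4 := y.trans' (MC hM2) (y.symm' (MC hM4))
    have hy12 : y q1 q2 := hy q1 q2 q3 q4 h12 h23 h34 (hle hx13) hy24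
    have h1C : y q1 a0 := y.trans' hy12 (MC hM2)
    by_cases hM1 : M q1
    · exact Mtrans (x.symm' hx13) hM1
    · obtain ⟨hm1, hw1⟩ := key h1C hM1
      exfalso
      rcases hM2 with h2m | h2w
      · exact hM1 (Or.inl (x.symm' (hx m q1 q2 q3 hm1 h12 h23 (x.symm' h2m) hx13)))
      · exact hM1 (Or.inr (x.symm' (hx w q1 q2 q3 hw1 h12 h23 (x.symm' h2w) hx13)))
  -- define z
  set z : Setoid (Fin n) :=
    ⟨fun p q => x p q ∨ (M p ∧ M q), by
      constructor
      · exact fun p => Or.inl (x.refl' p)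
      · rintro p q (h | ⟨hp, hq⟩)
        · exact Or.inl (x.symm' h)
        · exact Or.inr ⟨hq, hp⟩
      · rintro p q r (h1 | ⟨hp, hq⟩) (h2 | ⟨hq', hr⟩)
        · exact Or.inl (x.trans' h1 h2)
        · exact Or.inr ⟨Mtrans h1 hq', hr⟩
        · exact Or.inr ⟨hp, Mtrans (x.symm' h2) hq⟩
        · exact Or.inr ⟨hp, hr⟩⟩ with hz
  have hzr : ∀ p q, z p q ↔ (x p q ∨ (M p ∧ M q)) := fun p q => Iff.rfl
  have hxz : x ≤ z := fun p q h => Or.inl h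
  have hzy : z ≤ y := by
    rintro p q (h | ⟨hp, hq⟩)
    · exact hle h
    · exact y.trans' (MC hp) (y.symm' (MC hq))
  have hxnez : x ≠ z := by
    intro h
    exact hwm (x.symm' (by rw [h]; exact Or.inr ⟨hMm, hMw⟩))
  -- z is noncrossing
  have hznc : IsNoncrossing z := by
    rintro a b c d hab hbc hcd (hac | ⟨hMa, hMc⟩) (hbd | ⟨hMb, hMd⟩)
    · exact Or.inl (hx a b c d hab hbc hcd hac hbd)
    · have hMc := claimB a b c d hab hbc hcd hac hMb hMd
      exact Or.inr ⟨Mtrans hac hMc, hMb⟩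
    · exact Or.inr ⟨hMa, claimA a b c d hab hbc hcd hMa hMc hbd⟩
    · exact Or.inr ⟨hMa, hMb⟩
  -- block count
  have hcard : blocks z + 1 = blocks x := by
    have wd : ∀ p q : Fin n, z p q →
        Quotient.mk x (if M p then m else p) = Quotient.mk x (if M q then m else q) := by
      rintro p q (h | ⟨hp, hq⟩)
      · by_cases hMp : M p
        · rw [if_pos hMp, if_pos (Mtrans (x.symm' h) hMp)]
        · rw [if_neg hMp, if_neg (fun hMq => hMp (Mtrans h hMq))]
          exact Quotient.sound h
      · rw [if_pos hp, if_pos hq]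
    set h : Quotient z → Quotient x :=
      Quotient.lift (fun p => Quotient.mk x (if M p then m else p)) wd with hh
    have hne' : ∀ q : Quotient z, h q ≠ Quotient.mk x w := by
      refine Quotient.ind ?_
      intro p heq
      by_cases hMp : M p
      · rw [show h (Quotient.mk z p) = Quotient.mk x (if M p then m else p) from rfl,
          if_pos hMp] at heq
        exact hwm (x.symm' (Quotient.exact heq))
      · rw [show h (Quotient.mk z p) = Quotient.mk x (if M p then m else p) from rfl,
          if_neg hMp] at heq
        exact hMp (Or.inr (Quotient.exact heq))
    set g : Quotient x → Quotient z := qmap hxz with hg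
    have e : Quotient z ≃ {c : Quotient x // c ≠ Quotient.mk x w} :=
      { toFun := fun q => ⟨h q, hne' q⟩
        invFun := fun c => g c.1
        left_inv := by
          refine Quotient.ind ?_
          intro p
          show g (Quotient.mk x (if M p then m else p)) = Quotient.mk z p
          by_cases hMp : M p
          · rw [if_pos hMp]
            exact Quotient.sound (Or.inr ⟨hMm, hMp⟩)
          · rw [if_neg hMp]
            rfl
        right_inv := by
          have hgh : ∀ p : Fin n, ¬ x p w →
              h (g (Quotient.mk x p)) = Quotient.mk x p := by
            intro p hpw
            show Quotient.mk x (if M p then m else p) = Quotient.mk x p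
            by_cases hMp : M p
            · rw [if_pos hMp]
              rcases hMp with hpm | hpw'
              · exact Quotient.sound (x.symm' hpm)
              · exact absurd hpw' hpw
            · rw [if_neg hMp]
          rintro ⟨c, hc⟩
          obtain ⟨p, rfl⟩ := Quotient.exists_rep c
          exact Subtype.ext (hgh p fun hpw => hc (Quotient.sound hpw)) }
    have e2 : Quotient x ≃ {c : Quotient x // c = Quotient.mk x w} ⊕
        {c : Quotient x // ¬ c = Quotient.mk x w} := (Equiv.sumCompl _).symm
    have h1 : Nat.card {c : Quotient x // c = Quotient.mk x w} = 1 := by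
      rw [Nat.card_eq_one_iff_exists]
      exact ⟨⟨Quotient.mk x w, rfl⟩, fun y => Subtype.ext y.2⟩
    have : blocks x = 1 + blocks z := by
      rw [blocks, blocks, Nat.card_congr e2, Nat.card_sum, h1, Nat.card_congr e]
    omega
  exact ⟨z, hznc, hxz, hzy, hxnez, hcard⟩

lemma merge' {x y : NC n} (h : x < y) :
    ∃ z : NC n, x < z ∧ z ≤ y ∧ blocks z.1 + 1 = blocks x.1 := by
  obtain ⟨z, hznc, hxz, hzy, hxnez, hcard⟩ :=
    merge x.2 y.2 (Subtype.coe_le_coe.mpr h.le) (fun he => h.ne (Subtype.ext he))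
  exact ⟨⟨z, hznc⟩, lt_of_le_of_ne hxz (fun he => hxnez (congrArg Subtype.val he)),
    hzy, hcard⟩

lemma covby_of_blocks {x z : NC n} (h : x < z) (hb : blocks z.1 + 1 = blocks x.1) :
    x ⋖ z := by
  refine ⟨h, fun c hxc hcz => ?_⟩
  have h1 : blocks c.1 < blocks x.1 := by
    have := blocks_anti hxc.le
    exact lt_of_le_of_ne this fun he =>
      hxc.ne (Subtype.ext (eq_of_le_blocks_le hxc.le he.ge))
  have h2 : blocks z.1 < blocks c.1 := by
    have := blocks_anti hcz.le
    exact lt_of_le_of_ne this fun he =>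
      hcz.ne (Subtype.ext (eq_of_le_blocks_le hcz.le he.ge))
  omega

lemma cov_blocks {x y : NC n} (h : x ⋖ y) : blocks x.1 = blocks y.1 + 1 := by
  obtain ⟨z, hxz, hzy, hcard⟩ := merge' h.lt
  rcases eq_or_lt_of_le hzy with rfl | hlt
  · omega
  · exact absurd hlt (h.2 hxz)

lemma walk_up : ∀ (k : ℕ) (x y : NC n), x ≤ y → blocks x.1 ≤ blocks y.1 + k →
    ∃ w : (hasse n).Walk x y, w.length ≤ k := by
  intro k
  induction k with
  | zero =>
    intro x y hxy hb
    have : x = y := Subtype.ext (eq_of_le_blocks_le hxy (by omega))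
    subst this
    exact ⟨SimpleGraph.Walk.nil, by simp⟩
  | succ k ih =>
    intro x y hxy hb
    rcases eq_or_lt_of_le hxy with rfl | hlt
    · exact ⟨SimpleGraph.Walk.nil, by simp⟩
    · obtain ⟨z, hxz, hzy, hcard⟩ := merge' hlt
      have hadj : (hasse n).Adj x z := Or.inl (covby_of_blocks hxz hcard)
      have hbz : blocks z.1 ≤ blocks y.1 + k := by
        have := blocks_anti (Subtype.coe_le_coe.mpr hzy)
        omega
      obtain ⟨w, hw⟩ := ih z y hzy hbz
      exact ⟨SimpleGraph.Walk.cons hadj w, by simpa using Nat.succ_le_succ hw⟩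

lemma walk_blocks {x y : NC n} (w : (hasse n).Walk x y) :
    blocks x.1 ≤ blocks y.1 + w.length := by
  induction w with
  | nil => simp
  | cons h p ih =>
    rcases h with h | h
    · have := cov_blocks h
      change _ ≤ _ + (p.length + 1)
      omega
    · have := cov_blocks h
      change _ ≤ _ + (p.length + 1)
      omega

def botNC : NC n :=
  ⟨⊥, fun a b c _ hab hbc _ hac _ => absurd (hac : a = c) (ne_of_lt (hab.trans hbc))⟩

def topNC : NC n := ⟨⊤, fun _ _ _ _ _ _ _ _ _ => trivial⟩

lemma blocks_bot : blocks (⊥ : Setoid (Fin n)) = n := by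
  have hbij : Function.Bijective (Quotient.mk (⊥ : Setoid (Fin n))) := by
    constructor
    · exact fun a b h => Quotient.exact h
    · exact fun q => Quotient.exists_rep q
  rw [blocks, ← Nat.card_eq_of_bijective _ hbij, Nat.card_eq_fintype_card, Fintype.card_fin]

lemma blocks_top (hn : 1 ≤ n) : blocks (⊤ : Setoid (Fin n)) = 1 := by
  rw [blocks, Nat.card_eq_one_iff_exists]
  refine ⟨Quotient.mk _ ⟨0, hn⟩, ?_⟩
  refine Quotient.ind ?_
  intro a
  exact Quotient.sound trivial

lemma one_le_blocks {s : Setoid (Fin n)} (hn : 1 ≤ n) : 1 ≤ blocks s := by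
  rw [blocks]
  have : Nonempty (Quotient s) := ⟨Quotient.mk s ⟨0, hn⟩⟩
  exact Nat.one_le_iff_ne_zero.mpr (Nat.card_ne_zero.mpr ⟨this, inferInstance⟩)

lemma blocks_le {s : Setoid (Fin n)} : blocks s ≤ n := by
  have h := blocks_anti (bot_le (a := s))
  rwa [blocks_bot] at h

end Aux

/-- The diameter of the Hasse diagram of `NC n` is `n - 1`: the graph is connected,
all distances are at most `n - 1`, and the distance `n - 1` is achieved. -/
theorem hasse_diameter (n : ℕ) (hn : 1 ≤ n) :
    (hasse n).Connected ∧
    (∀ π ρ : NC n, (hasse n).dist π ρ ≤ n - 1) ∧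
    (∃ π ρ : NC n, (hasse n).dist π ρ = n - 1) := by
  have hreach_top : ∀ π : NC n, (hasse n).Reachable π topNC := by
    intro π
    obtain ⟨w, _⟩ := walk_up (blocks π.1) π topNC (Subtype.coe_le_coe.mp le_top) (Nat.le_add_left _ _)
    exact ⟨w⟩
  have hne : Nonempty (NC n) := ⟨botNC⟩
  have hconn : (hasse n).Connected := by
    exact ⟨fun u v => (hreach_top u).trans (hreach_top v).symm⟩
  have hdist_top : ∀ π : NC n, (hasse n).dist π topNC ≤ blocks π.1 - 1 := by
    intro π
    have h1 : 1 ≤ blocks π.1 := one_le_blocks hn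
    obtain ⟨w, hw⟩ := walk_up (blocks π.1 - 1) π topNC (Subtype.coe_le_coe.mp le_top)
      (by rw [show (topNC : NC n).1 = ⊤ from rfl, blocks_top hn]; omega)
    exact le_trans (SimpleGraph.dist_le w) hw
  have hdist_bot : ∀ π : NC n, (hasse n).dist botNC π ≤ n - blocks π.1 := by
    intro π
    obtain ⟨w, hw⟩ := walk_up (n - blocks π.1) botNC π (Subtype.coe_le_coe.mp bot_le)
      (by rw [show (botNC : NC n).1 = ⊥ from rfl, blocks_bot]
          have := blocks_le (s := π.1); omega)
    exact le_trans (SimpleGraph.dist_le w) hw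
  refine ⟨hconn, fun π ρ => ?_, botNC, topNC, ?_⟩
  · have h1 := hconn.dist_triangle (u := π) (v := topNC) (w := ρ)
    have h2 := hconn.dist_triangle (u := π) (v := botNC) (w := ρ)
    have h3 := hdist_top π
    have h4 : (hasse n).dist topNC ρ ≤ blocks ρ.1 - 1 := by
      rw [SimpleGraph.dist_comm]; exact hdist_top ρ
    have h5 : (hasse n).dist π botNC ≤ n - blocks π.1 := by
      rw [SimpleGraph.dist_comm]; exact hdist_bot π
    have h6 := hdist_bot ρ
    have b1 : 1 ≤ blocks π.1 := one_le_blocks hn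
    have b2 : 1 ≤ blocks ρ.1 := one_le_blocks hn
    have b3 : blocks π.1 ≤ n := blocks_le
    have b4 : blocks ρ.1 ≤ n := blocks_le
    omega
  · have hub : (hasse n).dist botNC topNC ≤ n - 1 := by
      have := hdist_top (botNC : NC n)
      rwa [show (botNC : NC n).1 = ⊥ from rfl, blocks_bot] at this
    have hlb : n - 1 ≤ (hasse n).dist botNC topNC := by
      obtain ⟨w, hw⟩ := (hreach_top botNC).exists_walk_length_eq_dist
      have := walk_blocks w
      rw [show (botNC : NC n).1 = ⊥ from rfl, show (topNC : NC n).1 = ⊤ from rfl,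
        blocks_bot, blocks_top hn, hw] at this
      omega
    omega
end

section
/- If π, ρ ∈ NC(n) satisfy d_H(π,ρ) = n−1 (the diameter of the Hasse diagram), then π ∧ ρ = 0_n, π ∨ ρ = 1_n, and |π| + |ρ| = n + 1. -/
lemma down_surj {n} (s t : Setoid (Fin n)) (h : s ≤ t) :
    Function.Surjective (Quotient.lift (fun x => Quotient.mk t x)
      (fun a b hab => Quot.sound (h hab)) : Quotient s → Quotient t) := by
  intro q
  obtain ⟨x, rfl⟩ := Quotient.exists_rep q
  exact ⟨Quotient.mk s x, rfl⟩

lemma blocks_mono {n} {s t : Setoid (Fin n)} (h : s ≤ t) : blocks t ≤ blocks s :=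
  Nat.card_le_card_of_surjective _ (down_surj s t h)

lemma blocks_strict {n} {s t : Setoid (Fin n)} (h : s < t) : blocks t < blocks s := by
  refine lt_of_le_of_ne (blocks_mono h.le) fun he => (not_le_of_gt h) ?_
  have hb := (Nat.bijective_iff_surjective_and_card _).mpr ⟨down_surj s t h.le, he.symm⟩
  intro x y hxy
  have : Quotient.mk s x = Quotient.mk s y := hb.injective (Quot.sound hxy)
  exact Quotient.exact this

lemma nc_exists_between {n : ℕ} {s t : Setoid (Fin n)} (hs : IsNoncrossing s)
    (ht : IsNoncrossing t) (hst : s ≤ t) (hne : s ≠ t) :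
    ∃ u : Setoid (Fin n), IsNoncrossing u ∧ s ≤ u ∧ s ≠ u ∧ u ≤ t ∧
      blocks s = blocks u + 1 := by
  classical
  have hpair : ∃ a b : Fin n, a < b ∧ t.r a b ∧ ¬ s.r a b := by
    by_contra hc
    push_neg at hc
    apply hne (le_antisymm hst ?_)
    intro x y hxy
    rcases lt_trichotomy x y with hlt | rfl | hgt
    · exact hc x y hlt hxy
    · exact s.refl x
    · exact s.symm (hc y x hgt (t.symm hxy))
  obtain ⟨a₀, b₀, h₀⟩ := hpair
  have hex : ∃ k, ∃ a b : Fin n, a < b ∧ t.r a b ∧ ¬ s.r a b ∧ (b : ℕ) - (a : ℕ) = k :=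
    ⟨_, a₀, b₀, h₀.1, h₀.2.1, h₀.2.2, rfl⟩
  obtain ⟨a, b, hab, htab, hsab, hk⟩ := Nat.find_spec hex
  have hmin : ∀ a' b' : Fin n, a' < b' → t.r a' b' → ¬ s.r a' b' →
      (b : ℕ) - (a : ℕ) ≤ (b' : ℕ) - (a' : ℕ) := by
    intro a' b' h1 h2 h3
    rw [hk]
    exact Nat.find_le ⟨a', b', h1, h2, h3, rfl⟩
  have F1 : ∀ c : Fin n, a < c → c < b → ¬ t.r a c := by
    intro c h1 h2 htac
    have h1' : (a : ℕ) < (c : ℕ) := h1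
    have h2' : (c : ℕ) < (b : ℕ) := h2
    have hab' : (a : ℕ) < (b : ℕ) := hab
    have hsac : s.r a c := by
      by_contra hno
      have := hmin a c h1 htac hno
      omega
    have htcb : t.r c b := t.trans (t.symm htac) htab
    have hscb : s.r c b := by
      by_contra hno
      have := hmin c b h2 htcb hno
      omega
    exact hsab (s.trans hsac hscb)
  set P : Fin n → Prop := fun e => s.r e a ∨ s.r e b with hPdef
  have Ptrans : ∀ {p q : Fin n}, s.r p q → P q → P p := by
    intro p q hpq h
    exact h.elim (fun h' => Or.inl (s.trans hpq h')) fun h' => Or.inr (s.trans hpq h')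
  let u : Setoid (Fin n) :=
    { r := fun p q => s.r p q ∨ (P p ∧ P q)
      iseqv := ⟨fun x => Or.inl (s.refl x),
        fun h => h.elim (fun h' => Or.inl (s.symm h')) (fun h' => Or.inr ⟨h'.2, h'.1⟩),
        fun {x y z} h1 h2 => by
          rcases h1 with h1 | h1 <;> rcases h2 with h2 | h2
          · exact Or.inl (s.trans h1 h2)
          · exact Or.inr ⟨Ptrans h1 h2.1, h2.2⟩
          · exact Or.inr ⟨h1.1, Ptrans (s.symm h2) h1.2⟩
          · exact Or.inr ⟨h1.1, h2.2⟩⟩ }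
  have toP : ∀ p γ : Fin n, (γ = a ∨ γ = b) → s.r p γ → P p := by
    rintro p γ (rfl | rfl) h
    · exact Or.inl h
    · exact Or.inr h
  have hK : ∀ p q e1 e2 : Fin n, s.r p q → p < q → P e1 → P e2 →
      p < e1 → e1 < q → (e2 < p ∨ q < e2) → P p ∨ (e2 < p ∧ s.r e2 p) := by
    intro p q e1 e2 hpq hplq hPe1 hPe2 hpe1 he1q he2pos
    obtain ⟨α, hα, h1⟩ : ∃ γ, (γ = a ∨ γ = b) ∧ s.r e1 γ := by
      rcases hPe1 with h | h
      exacts [⟨a, Or.inl rfl, h⟩, ⟨b, Or.inr rfl, h⟩]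
    obtain ⟨β, hβ, h2⟩ : ∃ γ, (γ = a ∨ γ = b) ∧ s.r e2 γ := by
      rcases hPe2 with h | h
      exacts [⟨a, Or.inl rfl, h⟩, ⟨b, Or.inr rfl, h⟩]
    by_cases hin : p < α ∧ α < q
    · by_cases hβin : p < β ∧ β < q
      · rcases he2pos with hlt | hgt
        · exact Or.inr ⟨hlt, hs e2 p β q hlt hβin.1 hβin.2 h2 hpq⟩
        · exact Or.inl (toP p β hβ (hs p β q e2 hβin.1 hβin.2 hgt hpq (s.symm h2)))
      · rcases lt_trichotomy β p with hβp | heq | hpβ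
        · exfalso
          rcases hα with hα' | hα' <;> rcases hβ with hβ' | hβ' <;>
            rw [hα'] at hin <;> rw [hβ'] at hβp
          · exact absurd hβp (asymm hin.1)
          · exact lt_irrefl p (hin.1.trans (hab.trans hβp))
          · exact F1 p hβp hin.1 (ht a p b q hβp hin.1 hin.2 htab (hst hpq))
          · exact absurd hβp (asymm hin.1)
        · exact Or.inl (toP p β hβ (by rw [heq]))
        · rcases lt_trichotomy β q with hβq | heq | hqβ
          · exact absurd ⟨hpβ, hβq⟩ hβin
          · exact Or.inl (toP p β hβ (by rw [heq]; exact hpq))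
          · exfalso
            rcases hα with hα' | hα' <;> rcases hβ with hβ' | hβ' <;>
              rw [hα'] at hin <;> rw [hβ'] at hqβ
            · exact absurd hqβ (asymm hin.2)
            · have h5 := ht p a q b hin.1 hin.2 hqβ (hst hpq) htab
              exact F1 q hin.2 hqβ (t.trans (t.symm h5) (hst hpq))
            · exact lt_irrefl a ((hab.trans hin.2).trans hqβ)
            · exact absurd hqβ (asymm hin.2)
    · -- anchor of the inner element e1 is outside the open interval (p,q)
      refine Or.inl ?_
      rcases lt_trichotomy α p with hlt | heq | hgt
      · exact toP p α hα (s.symm (hs α p e1 q hlt hpe1 he1q (s.symm h1) hpq))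
      · exact toP p α hα (by rw [heq])
      · rcases lt_trichotomy α q with hlt2 | heq | hgt2
        · exact absurd ⟨hgt, hlt2⟩ hin
        · exact toP p α hα (by rw [heq]; exact hpq)
        · exact toP p α hα (s.trans (hs p e1 q α hpe1 he1q hgt2 hpq h1) h1)
  have hu : IsNoncrossing u := by
    intro w x y z hwx hxy hyz hwy hxz
    rcases (hwy : s.r w y ∨ (P w ∧ P y)) with hswy | ⟨hPw, hPy⟩
    · rcases (hxz : s.r x z ∨ (P x ∧ P z)) with hsxz | ⟨hPx, hPz⟩
      · exact Or.inl (hs w x y z hwx hxy hyz hswy hsxz)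
      · rcases hK w y x z hswy (hwx.trans hxy) hPx hPz hwx hxy (Or.inr hyz) with
          hPw | ⟨hzw, _⟩
        · exact Or.inr ⟨hPw, hPx⟩
        · exact absurd hzw (asymm (hwx.trans (hxy.trans hyz)))
    · rcases (hxz : s.r x z ∨ (P x ∧ P z)) with hsxz | ⟨hPx, hPz⟩
      · rcases hK x z y w hsxz (hxy.trans hyz) hPy hPw hxy hyz (Or.inl hwx) with
          hPx | ⟨_, hswx⟩
        · exact Or.inr ⟨hPw, hPx⟩
        · exact Or.inl hswx
      · exact Or.inr ⟨hPw, hPx⟩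
  have hsu : s ≤ u := Setoid.le_def.mpr fun hxy => Or.inl hxy
  have hurab : u.r a b := Or.inr ⟨Or.inl (s.refl a), Or.inr (s.refl b)⟩
  have hneu : s ≠ u := by
    intro he
    apply hsab
    rw [he]
    exact hurab
  have hut : u ≤ t := by
    rw [Setoid.le_def]
    intro x y hxy
    rcases (hxy : s.r x y ∨ (P x ∧ P y)) with hxy | ⟨hPx, hPy⟩
    · exact hst hxy
    · have hx : t.r x a := hPx.elim (fun h => hst h) fun h => t.trans (hst h) (t.symm htab)
      have hy : t.r y a := hPy.elim (fun h => hst h) fun h => t.trans (hst h) (t.symm htab)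
      exact t.trans hx (t.symm hy)
  -- counting
  have hcount : blocks s = blocks u + 1 := by
    let f : Quotient s → (Quotient u) ⊕ Unit :=
      Quotient.lift (fun p => if s.r p b then Sum.inr () else Sum.inl (Quotient.mk u p))
        (by
          intro p q hpq
          by_cases hb : s.r p b
          · have hqb : s.r q b := s.trans (s.symm hpq) hb
            rw [if_pos hb, if_pos hqb]
          · have hqb : ¬ s.r q b := fun h => hb (s.trans hpq h)
            rw [if_neg hb, if_neg hqb]
            exact congrArg Sum.inl (Quot.sound (Or.inl hpq)))
    have hfp : ∀ r : Fin n, f (Quotient.mk s r) =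
        if s.r r b then Sum.inr () else Sum.inl (Quotient.mk u r) := fun r => rfl
    have hinj : Function.Injective f := by
      intro x y
      refine Quotient.inductionOn₂ x y ?_
      intro p q h
      rw [hfp, hfp] at h
      by_cases hp : s.r p b <;> by_cases hq : s.r q b
      · exact Quot.sound (s.trans hp (s.symm hq))
      · rw [if_pos hp, if_neg hq] at h; exact absurd h (by simp)
      · rw [if_neg hp, if_pos hq] at h; exact absurd h (by simp)
      · rw [if_neg hp, if_neg hq] at h
        have hupq : u.r p q := Quotient.exact (Sum.inl.inj h)
        rcases (hupq : s.r p q ∨ (P p ∧ P q)) with h' | ⟨hPp, hPq⟩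
        · exact Quot.sound h'
        · have h1 : s.r p a := hPp.elim id fun h'' => absurd h'' hp
          have h2 : s.r q a := hPq.elim id fun h'' => absurd h'' hq
          exact Quot.sound (s.trans h1 (s.symm h2))
    have hsurj : Function.Surjective f := by
      intro y
      cases y with
      | inl x =>
        obtain ⟨p, rfl⟩ := Quotient.exists_rep x
        by_cases hb : s.r p b
        · refine ⟨Quotient.mk s a, ?_⟩
          rw [hfp, if_neg hsab]
          exact congrArg Sum.inl (Quot.sound (Or.inr ⟨Or.inl (s.refl a), Or.inr hb⟩))
        · exact ⟨Quotient.mk s p, by rw [hfp, if_neg hb]⟩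
      | inr z =>
        cases z
        have hbb : s.r b b := s.refl b
        exact ⟨Quotient.mk s b, by rw [hfp, if_pos hbb]⟩
    have := Nat.card_congr (Equiv.ofBijective f ⟨hinj, hsurj⟩)
    simpa [blocks, Nat.card_sum] using this
  exact ⟨u, hu, hsu, hneu, hut, hcount⟩

lemma walk_exists {n : ℕ} (N : ℕ) : ∀ v s : NC n, v ≤ s → blocks v.1 ≤ N →
    ∃ p : (hasse n).Walk v s, p.length = blocks v.1 - blocks s.1 := by
  induction N with
  | zero =>
    intro v s hvs hle
    by_cases he : v = s
    · subst he; exact ⟨SimpleGraph.Walk.nil, by simp⟩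
    · have hlt : v.1 < s.1 := lt_of_le_of_ne hvs fun h => he (Subtype.ext h)
      have := blocks_strict hlt
      omega
  | succ N ih =>
    intro v s hvs hle
    by_cases he : v = s
    · subst he; exact ⟨SimpleGraph.Walk.nil, by simp⟩
    · have hne : v.1 ≠ s.1 := fun h => he (Subtype.ext h)
      obtain ⟨u, hu, h1, h2, h3, h4⟩ := nc_exists_between v.2 s.2 hvs hne
      set U : NC n := ⟨u, hu⟩ with hU
      have hvU : v < U := lt_of_le_of_ne h1 fun h => h2 (congrArg Subtype.val h)
      have hUs : U ≤ s := h3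
      have hadj : (hasse n).Adj v U := by
        refine Or.inl ⟨hvU, fun c hc1 hc2 => ?_⟩
        have b1 := blocks_strict (show v.1 < c.1 from hc1)
        have b2 := blocks_strict (show c.1 < u from hc2)
        omega
      have hbu : blocks u ≤ N := by omega
      obtain ⟨w, hw⟩ := ih U s hUs hbu
      have hbs : blocks s.1 ≤ blocks u := blocks_mono h3
      refine ⟨SimpleGraph.Walk.cons hadj w, ?_⟩
      simp only [SimpleGraph.Walk.length_cons, hw]
      have hUu : blocks U.1 = blocks u := rfl
      omega

lemma dist_le_up {n : ℕ} (x y m : NC n) (h1 : m ≤ x) (h2 : m ≤ y) :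
    (hasse n).dist x y ≤ (blocks m.1 - blocks x.1) + (blocks m.1 - blocks y.1) := by
  obtain ⟨w1, hw1⟩ := walk_exists (blocks m.1) m x h1 le_rfl
  obtain ⟨w2, hw2⟩ := walk_exists (blocks m.1) m y h2 le_rfl
  have := SimpleGraph.dist_le (w1.reverse.append w2)
  simpa [hw1, hw2] using this

lemma dist_le_down {n : ℕ} (x y j : NC n) (h1 : x ≤ j) (h2 : y ≤ j) :
    (hasse n).dist x y ≤ (blocks x.1 - blocks j.1) + (blocks y.1 - blocks j.1) := by
  obtain ⟨w1, hw1⟩ := walk_exists (blocks x.1) x j h1 le_rfl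
  obtain ⟨w2, hw2⟩ := walk_exists (blocks y.1) y j h2 le_rfl
  have := SimpleGraph.dist_le (w1.append w2.reverse)
  simpa [hw1, hw2] using this

/-- If `d_H(π,ρ) = n - 1` then `π ∧ ρ = 0_n` (the meet is the minimum of `NC n`),
`π ∨ ρ = 1_n` (the join is the maximum of `NC n`), and `|π| + |ρ| = n + 1`. -/
theorem diameter_pair (n : ℕ) (hn : 1 ≤ n) (π ρ : NC n)
    (h : (hasse n).dist π ρ = n - 1) :
    (∀ m : NC n, IsGLB {π, ρ} m → ∀ θ : NC n, m ≤ θ) ∧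
    (∀ j : NC n, IsLUB {π, ρ} j → ∀ θ : NC n, θ ≤ j) ∧
    blocks π.1 + blocks ρ.1 = n + 1 := by
  classical
  have hnemp : Nonempty (Fin n) := ⟨⟨0, hn⟩⟩
  -- generic bounds on blocks
  have hb_le : ∀ s : Setoid (Fin n), blocks s ≤ n := by
    intro s
    have := Nat.card_le_card_of_surjective (Quotient.mk s)
      (fun q => Quotient.exists_rep q)
    simpa [blocks, Nat.card_eq_fintype_card] using this
  have hb_pos : ∀ s : Setoid (Fin n), 1 ≤ blocks s := by
    intro s
    have : Nonempty (Quotient s) := ⟨Quotient.mk s hnemp.some⟩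
    exact Nat.card_pos
  -- bottom and top
  have hncbot : IsNoncrossing (⊥ : Setoid (Fin n)) := by
    intro a b c d hab hbc hcd hac _
    exact absurd (hac : a = c) (ne_of_lt (hab.trans hbc))
  have hnctop : IsNoncrossing (⊤ : Setoid (Fin n)) := by
    intro a b c d _ _ _ _ _
    trivial
  set bot : NC n := ⟨⊥, hncbot⟩ with hbotdef
  set top : NC n := ⟨⊤, hnctop⟩ with htopdef
  have hblocksbot : blocks (⊥ : Setoid (Fin n)) = n := by
    have hbij : Function.Bijective (Quotient.mk (⊥ : Setoid (Fin n))) :=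
      ⟨fun x y hxy => (Quotient.exact hxy : x = y), fun q => Quotient.exists_rep q⟩
    have := Nat.card_congr (Equiv.ofBijective _ hbij)
    simpa [blocks, Nat.card_eq_fintype_card] using this.symm
  have hblockstop : blocks (⊤ : Setoid (Fin n)) = 1 := by
    refine Nat.card_eq_one_iff_unique.mpr ⟨⟨?_⟩, ⟨Quotient.mk _ hnemp.some⟩⟩
    intro x y
    obtain ⟨p, rfl⟩ := Quotient.exists_rep x
    obtain ⟨q, rfl⟩ := Quotient.exists_rep y
    exact Quot.sound trivial
  have hbotle : ∀ θ : NC n, bot ≤ θ := fun θ => bot_le (a := θ.1)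
  have hletop : ∀ θ : NC n, θ ≤ top := fun θ => le_top (a := θ.1)
  -- the sum of blocks
  have hd1 := dist_le_up π ρ bot (hbotle π) (hbotle ρ)
  have hd2 := dist_le_down π ρ top (hletop π) (hletop ρ)
  rw [hbotdef] at hd1
  rw [htopdef] at hd2
  simp only [hblocksbot, hblockstop] at hd1 hd2
  have hπn := hb_le π.1
  have hρn := hb_le ρ.1
  have hπ1 := hb_pos π.1
  have hρ1 := hb_pos ρ.1
  have hsum : blocks π.1 + blocks ρ.1 = n + 1 := by omega
  refine ⟨?_, ?_, hsum⟩
  · intro m hm θ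
    have hmπ : m ≤ π := hm.1 (Set.mem_insert _ _)
    have hmρ : m ≤ ρ := hm.1 (Set.mem_insert_of_mem _ rfl)
    have hd := dist_le_up π ρ m hmπ hmρ
    have h1 : blocks π.1 ≤ blocks m.1 := blocks_mono hmπ
    have h2 : blocks ρ.1 ≤ blocks m.1 := blocks_mono hmρ
    have h3 := hb_le m.1
    have hmn : blocks m.1 = n := by omega
    -- m is the discrete partition
    have hbij : Function.Bijective (Quotient.mk m.1) :=
      (Nat.bijective_iff_surjective_and_card _).mpr
        ⟨fun q => Quotient.exists_rep q,
          ((by simp [Nat.card_eq_fintype_card] : Nat.card (Fin n) = n)).trans hmn.symm⟩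
    intro x y hxy
    have : x = y := hbij.injective (Quot.sound hxy)
    subst this
    exact θ.1.refl x
  · intro j hj θ
    have hπj : π ≤ j := hj.1 (Set.mem_insert _ _)
    have hρj : ρ ≤ j := hj.1 (Set.mem_insert_of_mem _ rfl)
    have hd := dist_le_down π ρ j hπj hρj
    have h1 : blocks j.1 ≤ blocks π.1 := blocks_mono hπj
    have h3 := hb_pos j.1
    have hj1 : blocks j.1 = 1 := by omega
    have hsub : Subsingleton (Quotient j.1) := (Nat.card_eq_one_iff_unique.mp hj1).1
    intro x y _
    exact Quotient.exact (Subsingleton.elim (Quotient.mk j.1 x) (Quotient.mk j.1 y))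
end

section
/- For π, ρ ∈ NC(n), d_H(π,ρ) = |π| + |ρ| − 2·c(π,ρ), where c(π,ρ) is the number of blocks of the join of π and ρ in the lattice of all set partitions of {1,...,n}. -/
namespace NCAux

open Setoid

variable {n : ℕ}

/-- Merge the classes of `a` and `b` in `s`. -/
def mergeS (s : Setoid (Fin n)) (a b : Fin n) : Setoid (Fin n) where
  r x y := s x y ∨ (s x a ∧ s b y) ∨ (s x b ∧ s a y)
  iseqv := by
    refine ⟨fun x => Or.inl (s.refl' x), ?_, ?_⟩
    · rintro x y (h | ⟨h1, h2⟩ | ⟨h1, h2⟩)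
      · exact Or.inl (s.symm' h)
      · exact Or.inr (Or.inr ⟨s.symm' h2, s.symm' h1⟩)
      · exact Or.inr (Or.inl ⟨s.symm' h2, s.symm' h1⟩)
    · rintro x y z (h | ⟨h1, h2⟩ | ⟨h1, h2⟩) (g | ⟨g1, g2⟩ | ⟨g1, g2⟩)
      · exact Or.inl (s.trans' h g)
      · exact Or.inr (Or.inl ⟨s.trans' h g1, g2⟩)
      · exact Or.inr (Or.inr ⟨s.trans' h g1, g2⟩)
      · exact Or.inr (Or.inl ⟨h1, s.trans' h2 g⟩)
      · exact Or.inl (s.trans' h1 (s.trans' (s.symm' (s.trans' h2 g1)) g2))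
      · exact Or.inl (s.trans' h1 g2)
      · exact Or.inr (Or.inr ⟨h1, s.trans' h2 g⟩)
      · exact Or.inl (s.trans' h1 g2)
      · exact Or.inl (s.trans' h1 (s.trans' (s.symm' (s.trans' h2 g1)) g2))

lemma mergeS_rel {s : Setoid (Fin n)} {a b x y : Fin n} :
    (mergeS s a b) x y ↔ s x y ∨ (s x a ∧ s b y) ∨ (s x b ∧ s a y) := Iff.rfl

lemma mergeS_ab (s : Setoid (Fin n)) (a b : Fin n) : (mergeS s a b) a b :=
  Or.inr (Or.inl ⟨s.refl' a, s.refl' b⟩)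

lemma le_mergeS (s : Setoid (Fin n)) (a b : Fin n) : s ≤ mergeS s a b :=
  fun _ _ h => Or.inl h

lemma mergeS_le {s t : Setoid (Fin n)} {a b : Fin n} (h : s ≤ t) (hab : t a b) :
    mergeS s a b ≤ t := by
  rintro x y (hxy | ⟨h1, h2⟩ | ⟨h1, h2⟩)
  · exact h hxy
  · exact t.trans' (h h1) (t.trans' hab (h h2))
  · exact t.trans' (h h1) (t.trans' (t.symm' hab) (h h2))

lemma mergeS_mono {s t : Setoid (Fin n)} (a b : Fin n) (h : s ≤ t) :
    mergeS s a b ≤ mergeS t a b :=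
  mergeS_le (le_trans h (le_mergeS t a b)) (mergeS_ab t a b)

lemma mergeS_self {s : Setoid (Fin n)} {a b : Fin n} (h : s a b) : mergeS s a b = s :=
  le_antisymm (mergeS_le le_rfl h) (le_mergeS s a b)

lemma mergeS_sup (s t : Setoid (Fin n)) (a b : Fin n) :
    mergeS s a b ⊔ t = mergeS (s ⊔ t) a b := by
  apply le_antisymm
  · exact sup_le (mergeS_mono a b le_sup_left)
      (le_trans le_sup_right (le_mergeS (s ⊔ t) a b))
  · refine mergeS_le (sup_le (le_trans (le_mergeS s a b) le_sup_left) le_sup_right) ?_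
    exact (le_sup_left : mergeS s a b ≤ mergeS s a b ⊔ t) (mergeS_ab s a b)

/-- Split the set `R` off from the partition `s`. -/
def splitS (s : Setoid (Fin n)) (R : Set (Fin n)) : Setoid (Fin n) where
  r x y := s x y ∧ (x ∈ R ↔ y ∈ R)
  iseqv := ⟨fun x => ⟨s.refl' x, Iff.rfl⟩, fun h => ⟨s.symm' h.1, h.2.symm⟩,
    fun h g => ⟨s.trans' h.1 g.1, h.2.trans g.2⟩⟩

lemma splitS_rel {s : Setoid (Fin n)} {R : Set (Fin n)} {x y : Fin n} :
    (splitS s R) x y ↔ s x y ∧ (x ∈ R ↔ y ∈ R) := Iff.rfl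

lemma splitS_le (s : Setoid (Fin n)) (R : Set (Fin n)) : splitS s R ≤ s :=
  fun _ _ h => h.1

lemma merge_splitS {s : Setoid (Fin n)} {R : Set (Fin n)} {y t : Fin n}
    (hyt : s y t) (hyR : y ∈ R) (htR : t ∉ R) (hRX : ∀ x ∈ R, s y x) :
    mergeS (splitS s R) y t = s := by
  apply Setoid.ext
  intro u v
  constructor
  · rintro (h | ⟨h1, h2⟩ | ⟨h1, h2⟩)
    · exact h.1
    · exact s.trans' h1.1 (s.trans' hyt h2.1)
    · exact s.trans' h1.1 (s.trans' (s.symm' hyt) h2.1)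
  · intro h
    by_cases huR : u ∈ R <;> by_cases hvR : v ∈ R
    · exact Or.inl ⟨h, iff_of_true huR hvR⟩
    · refine Or.inr (Or.inl ⟨⟨s.symm' (hRX u huR), iff_of_true huR hyR⟩, ?_⟩)
      exact ⟨s.trans' (s.symm' hyt) (s.trans' (hRX u huR) h), iff_of_false htR hvR⟩
    · refine Or.inr (Or.inr ⟨⟨s.trans' h (s.trans' (s.symm' (hRX v hvR)) hyt),
        iff_of_false huR htR⟩, ⟨hRX v hvR, iff_of_true hyR hvR⟩⟩)
    · exact Or.inl ⟨h, iff_of_false huR hvR⟩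

/-! ### Counting blocks -/

lemma blocks_mergeS {s : Setoid (Fin n)} {a b : Fin n} (hab : ¬ s a b) :
    blocks s = blocks (mergeS s a b) + 1 := by
  classical
  set m := mergeS s a b with hm
  have wd : ∀ x y : Fin n, s x y →
      (if s x b then (Sum.inr Unit.unit : Quotient m ⊕ Unit) else Sum.inl (Quotient.mk m x))
      = (if s y b then (Sum.inr Unit.unit : Quotient m ⊕ Unit)
        else Sum.inl (Quotient.mk m y)) := by
    intro x y hxy
    by_cases hx : s x b
    · rw [if_pos hx, if_pos (s.trans' (s.symm' hxy) hx)]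
    · rw [if_neg hx, if_neg (fun hy => hx (s.trans' hxy hy))]
      exact congrArg Sum.inl (Quot.sound (Or.inl hxy))
  let f : Quotient s → Quotient m ⊕ Unit :=
    Quotient.lift (fun x => if s x b then (Sum.inr Unit.unit : Quotient m ⊕ Unit)
      else Sum.inl (Quotient.mk m x)) wd
  have hbij : Function.Bijective f := by
    constructor
    · intro q1 q2
      refine Quotient.inductionOn₂ q1 q2 ?_
      intro x y h
      simp only [f, Quotient.lift_mk] at h
      by_cases hx : s x b <;> by_cases hy : s y b
      · exact Quot.sound (s.trans' hx (s.symm' hy))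
      · rw [if_pos hx, if_neg hy] at h; exact absurd h (by simp)
      · rw [if_neg hx, if_pos hy] at h; exact absurd h (by simp)
      · rw [if_neg hx, if_neg hy] at h
        have h' : Quotient.mk m x = Quotient.mk m y := by
          injection h
        have hmxy : m x y := Quotient.exact h'
        rcases hmxy with h'' | ⟨h1, h2⟩ | ⟨h1, h2⟩
        · exact Quot.sound h''
        · exact absurd (s.symm' h2) hy
        · exact absurd h1 hx
    · rintro (q | u)
      · refine Quotient.inductionOn q ?_
        intro z
        by_cases hz : s z b
        · refine ⟨Quotient.mk s a, ?_⟩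
          simp only [f, Quotient.lift_mk]
          rw [if_neg hab]
          refine congrArg Sum.inl (Quot.sound ?_)
          exact Or.inr (Or.inl ⟨s.refl' a, s.symm' hz⟩)
        · refine ⟨Quotient.mk s z, ?_⟩
          simp only [f, Quotient.lift_mk]
          rw [if_neg hz]
      · exact ⟨Quotient.mk s b, by simp only [f, Quotient.lift_mk]; rw [if_pos (s.refl' b)]⟩
  have := Nat.card_congr (Equiv.ofBijective f hbij)
  simpa [blocks, Nat.card_sum] using this

lemma blocks_le_of_le {s t : Setoid (Fin n)} (h : s ≤ t) : blocks t ≤ blocks s := by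
  have : Function.Surjective
      (Quotient.lift (Quotient.mk t) (fun x y hxy => Quot.sound (h hxy)) :
        Quotient s → Quotient t) := by
    intro q; refine Quotient.inductionOn q ?_; intro x; exact ⟨Quotient.mk s x, rfl⟩
  exact Nat.card_le_card_of_surjective _ this

lemma eq_of_le_of_blocks {s t : Setoid (Fin n)} (h : s ≤ t) (hb : blocks t = blocks s) :
    s = t := by
  classical
  let f : Quotient s → Quotient t :=
    Quotient.lift (Quotient.mk t) (fun x y hxy => Quot.sound (h hxy))
  have hsurj : Function.Surjective f := by
    intro q; refine Quotient.inductionOn q ?_; intro x; exact ⟨Quotient.mk s x, rfl⟩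
  have hinj : Function.Injective f := by
    have hcard : Nat.card (Quotient s) = Nat.card (Quotient t) := hb.symm
    rcases Finite.exists_equiv_fin (Quotient s) with ⟨k, ⟨e⟩⟩
    rcases Finite.exists_equiv_fin (Quotient t) with ⟨k', ⟨e'⟩⟩
    have hk : k = k' := by
      have h1 : Nat.card (Quotient s) = k := (Nat.card_congr e).trans (by simp)
      have h2 : Nat.card (Quotient t) = k' := (Nat.card_congr e').trans (by simp)
      rw [← h1, ← h2]; exact hcard
    subst hk
    have : Function.Surjective (e' ∘ f ∘ e.symm) :=
      (e'.surjective.comp hsurj).comp e.symm.surjective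
    have hinj' := Finite.injective_iff_surjective.2 this
    intro x y hxy
    have : (e' ∘ f ∘ e.symm) (e x) = (e' ∘ f ∘ e.symm) (e y) := by simp [hxy]
    have := hinj' this
    exact e.injective (by simpa using this)
  apply Setoid.ext
  intro x y
  constructor
  · exact fun hxy => h hxy
  · intro hxy
    have : f (Quotient.mk s x) = f (Quotient.mk s y) := Quot.sound hxy
    exact Quotient.exact (hinj this)

lemma blocks_lt_of_lt {s t : Setoid (Fin n)} (h : s < t) : blocks t < blocks s := by
  rcases lt_or_eq_of_le (blocks_le_of_le h.le) with h' | h'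
  · exact h'
  · exact absurd (eq_of_le_of_blocks h.le h') h.ne

lemma blocks_sup_le_left (s t : Setoid (Fin n)) : blocks (s ⊔ t) ≤ blocks s :=
  blocks_le_of_le le_sup_left

lemma blocks_sup_le_right (s t : Setoid (Fin n)) : blocks (s ⊔ t) ≤ blocks t :=
  blocks_le_of_le le_sup_right


/-! ### The merging lemma: between any two comparable noncrossing partitions there is an
elementary (noncrossing) merge. -/

lemma exists_nc_merge_between {π τ : Setoid (Fin n)} (hπ : IsNoncrossing π)
    (hτ : IsNoncrossing τ) (hle : π ≤ τ) (hne : π ≠ τ) :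
    ∃ a b : Fin n, ¬ π a b ∧ τ a b ∧ IsNoncrossing (mergeS π a b) := by
  classical
  have hdis : ∃ a0 b0 : Fin n, τ a0 b0 ∧ ¬ π a0 b0 := by
    by_contra h
    push_neg at h
    exact hne (le_antisymm hle (fun x y hxy => h x y hxy))
  obtain ⟨a0, b0, hτ0, hπ0⟩ := hdis
  set B0 : Finset (Fin n) := Finset.univ.filter (fun x => τ a0 x) with hB0
  have hne0 : B0.Nonempty := ⟨a0, by simp [hB0, τ.refl' a0]⟩
  set p0 := B0.min' hne0 with hp0def
  have hp0 : τ a0 p0 := by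
    have := B0.min'_mem hne0
    simp only [hB0, Finset.mem_filter, Finset.mem_univ, true_and] at this
    exact this
  have F1 : ∀ x, τ a0 x → p0 ≤ x := fun x hx =>
    B0.min'_le x (by simp [hB0, hx])
  set B1 : Finset (Fin n) := Finset.univ.filter (fun x => τ a0 x ∧ ¬ π p0 x) with hB1
  have hne1 : B1.Nonempty := by
    by_cases hpa : π p0 a0
    · refine ⟨b0, ?_⟩
      have hnb : ¬ π p0 b0 := fun h => hπ0 (π.trans' (π.symm' hpa) h)
      simp [hB1, hτ0, hnb]
    · exact ⟨a0, by simp [hB1, τ.refl' a0, hpa]⟩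
  set q0 := B1.min' hne1 with hq0def
  have hq0' : τ a0 q0 ∧ ¬ π p0 q0 := by
    have := B1.min'_mem hne1
    simpa only [hB1, Finset.mem_filter, Finset.mem_univ, true_and] using this
  have hq0 : τ a0 q0 := hq0'.1
  have hpq : ¬ π p0 q0 := hq0'.2
  have F2 : ∀ x, τ a0 x → ¬ π p0 x → q0 ≤ x := fun x h1 h2 =>
    B1.min'_le x (by simp [hB1, h1, h2])
  refine ⟨p0, q0, hpq, τ.trans' (τ.symm' hp0) hq0, ?_⟩
  have memB : ∀ {u v : Fin n}, π u v → τ a0 u → τ a0 v := fun h hu => τ.trans' hu (hle h)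
  have p0lt : ∀ {u : Fin n}, τ a0 u → ¬ π u p0 → p0 < u := by
    intro u hu hnp
    refine lt_of_le_of_ne (F1 u hu) (fun e => hnp ?_)
    rw [← e]
  have q0lt : ∀ {u : Fin n}, τ a0 u → ¬ π p0 u → ¬ π u q0 → q0 < u := by
    intro u hu hnp hnq
    refine lt_of_le_of_ne (F2 u hu hnp) (fun e => hnq ?_)
    rw [← e]
  intro x1 x2 x3 x4 h12 h23 h34 H13 H24
  rcases H13 with h13 | ⟨h1p, hq3⟩ | ⟨h1q, hp3⟩ <;>
    rcases H24 with h24 | ⟨h2p, hq4⟩ | ⟨h2q, hp4⟩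
  · exact Or.inl (hπ x1 x2 x3 x4 h12 h23 h34 h13 h24)
  · by_cases hx1p : π x1 p0
    · exact Or.inl (π.trans' hx1p (π.symm' h2p))
    by_cases hx1q : π x1 q0
    · exact Or.inr (Or.inr ⟨hx1q, π.symm' h2p⟩)
    exfalso
    by_cases hB : τ a0 x1
    · have hlt : p0 < x1 := p0lt hB hx1p
      exact hx1p (π.symm' (hπ p0 x1 x2 x3 hlt h12 h23 (π.symm' h2p) h13))
    · have hB2 : τ a0 x2 := memB (π.symm' h2p) hp0
      have hB4 : τ a0 x4 := memB hq4 hq0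
      have h24' : τ x2 x4 := τ.trans' (τ.symm' hB2) hB4
      exact hB (τ.trans' hB2 (τ.symm' (hτ x1 x2 x3 x4 h12 h23 h34 (hle h13) h24')))
  · by_cases hx1q : π x1 q0
    · exact Or.inl (π.trans' hx1q (π.symm' h2q))
    by_cases hx1p : π x1 p0
    · exact Or.inr (Or.inl ⟨hx1p, π.symm' h2q⟩)
    exfalso
    by_cases hB : τ a0 x1
    · have hlt : q0 < x1 := q0lt hB (fun h => hx1p (π.symm' h)) hx1q
      exact hx1q (π.symm' (hπ q0 x1 x2 x3 hlt h12 h23 (π.symm' h2q) h13))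
    · have hB2 : τ a0 x2 := memB (π.symm' h2q) hq0
      have hB4 : τ a0 x4 := memB hp4 hp0
      have h24' : τ x2 x4 := τ.trans' (τ.symm' hB2) hB4
      exact hB (τ.trans' hB2 (τ.symm' (hτ x1 x2 x3 x4 h12 h23 h34 (hle h13) h24')))
  · by_cases hx2p : π x2 p0
    · exact Or.inl (π.trans' h1p (π.symm' hx2p))
    by_cases hx2q : π x2 q0
    · exact Or.inr (Or.inl ⟨h1p, π.symm' hx2q⟩)
    exfalso
    by_cases hB : τ a0 x2
    · have hlt : q0 < x2 := q0lt hB (fun h => hx2p (π.symm' h)) hx2q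
      exact hx2q (π.symm' (hπ q0 x2 x3 x4 hlt h23 h34 hq3 h24))
    · have hB1 : τ a0 x1 := memB (π.symm' h1p) hp0
      have hB3 : τ a0 x3 := memB hq3 hq0
      have h13' : τ x1 x3 := τ.trans' (τ.symm' hB1) hB3
      exact hB (τ.trans' hB1 (hτ x1 x2 x3 x4 h12 h23 h34 h13' (hle h24)))
  · exact Or.inl (π.trans' h1p (π.symm' h2p))
  · exact Or.inr (Or.inl ⟨h1p, π.symm' h2q⟩)
  · have hB1 : τ a0 x1 := memB (π.symm' h1q) hq0
    have hx1p : ¬ π x1 p0 := fun h => hpq (π.trans' (π.symm' h) h1q)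
    have hplt : p0 < x1 := p0lt hB1 hx1p
    have hp2 : π p0 x2 := hπ p0 x2 x3 x4 (lt_trans hplt h12) h23 h34 hp3 h24
    exact Or.inr (Or.inr ⟨h1q, hp2⟩)
  · exact Or.inr (Or.inr ⟨h1q, π.symm' h2p⟩)
  · exact Or.inl (π.trans' h1q (π.symm' h2q))

lemma lt_mergeS {s : Setoid (Fin n)} {a b : Fin n} (hab : ¬ s a b) : s < mergeS s a b :=
  lt_of_le_of_ne (le_mergeS s a b) (fun e => hab (e.symm ▸ mergeS_ab s a b))

/-! ### Covers in `NC n` -/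

lemma cover_of_blocks {x z : NC n} (hlt : x.1 < z.1) (hb : blocks x.1 = blocks z.1 + 1) :
    x ⋖ z := by
  refine ⟨Subtype.coe_lt_coe.1 hlt, ?_⟩
  intro c hc1 hc2
  have l1 : blocks c.1 < blocks x.1 := blocks_lt_of_lt (Subtype.coe_lt_coe.2 hc1)
  have l2 : blocks z.1 < blocks c.1 := blocks_lt_of_lt (Subtype.coe_lt_coe.2 hc2)
  omega

lemma cover_eq_merge {x z : NC n} (h : x ⋖ z) :
    ∃ a b : Fin n, ¬ x.1 a b ∧ z.1 = mergeS x.1 a b ∧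
      blocks x.1 = blocks z.1 + 1 := by
  have hlt : x.1 < z.1 := Subtype.coe_lt_coe.2 h.lt
  obtain ⟨a, b, hab, hzab, hNC⟩ := exists_nc_merge_between x.2 z.2 hlt.le hlt.ne
  have hlem : mergeS x.1 a b ≤ z.1 := mergeS_le hlt.le hzab
  have hxm : x.1 < mergeS x.1 a b := lt_mergeS hab
  have hz : z = ⟨mergeS x.1 a b, hNC⟩ := by
    by_contra hne2
    have h2 : (⟨mergeS x.1 a b, hNC⟩ : NC n) < z :=
      lt_of_le_of_ne (Subtype.coe_le_coe.1 hlem) (fun e => hne2 e.symm)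
    exact h.2 (Subtype.coe_lt_coe.1 hxm) h2
  refine ⟨a, b, hab, by rw [hz], ?_⟩
  rw [hz]
  exact blocks_mergeS hab

/-! ### Lower bound along walks -/

lemma edge_ineq (ρ0 : Setoid (Fin n)) {x z : NC n} (h : (hasse n).Adj x z) :
    blocks x.1 + 2 * blocks (z.1 ⊔ ρ0) ≤ blocks z.1 + 2 * blocks (x.1 ⊔ ρ0) + 1 := by
  rcases h with h | h
  · obtain ⟨a, b, hab, hz, hb⟩ := cover_eq_merge h
    have h1 : blocks (z.1 ⊔ ρ0) ≤ blocks (x.1 ⊔ ρ0) :=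
      blocks_le_of_le (sup_le_sup_right (Subtype.coe_lt_coe.2 h.lt).le ρ0)
    omega
  · obtain ⟨a, b, hab, hx, hb⟩ := cover_eq_merge h
    have hsup : x.1 ⊔ ρ0 = mergeS (z.1 ⊔ ρ0) a b := by rw [hx, mergeS_sup]
    by_cases hrel : (z.1 ⊔ ρ0) a b
    · have he : x.1 ⊔ ρ0 = z.1 ⊔ ρ0 := by rw [hsup, mergeS_self hrel]
      rw [he]; omega
    · have h2 := blocks_mergeS hrel
      rw [← hsup] at h2
      omega

lemma lower_walk (ρ0 : Setoid (Fin n)) {x y : NC n} (w : (hasse n).Walk x y) :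
    blocks x.1 + 2 * blocks (y.1 ⊔ ρ0) ≤ blocks y.1 + 2 * blocks (x.1 ⊔ ρ0) + w.length := by
  induction w with
  | nil => simp
  | cons h w ih =>
    have he := edge_ineq ρ0 h
    simp only [SimpleGraph.Walk.length_cons]
    omega


/-! ### Splitting moves -/

lemma splitS_noncrossing {π : Setoid (Fin n)} (hπ : IsNoncrossing π) {y a b : Fin n}
    {R : Set (Fin n)} (hR : ∀ x, x ∈ R ↔ (π y x ∧ a < x ∧ x < b)) :
    IsNoncrossing (splitS π R) := by
  intro x1 x2 x3 x4 h12 h23 h34 H13 H24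
  obtain ⟨h13, i13⟩ := H13
  obtain ⟨h24, i24⟩ := H24
  have h12' : π x1 x2 := hπ x1 x2 x3 x4 h12 h23 h34 h13 h24
  refine ⟨h12', ?_⟩
  constructor
  · intro h1R
    have h3R := i13.1 h1R
    have hx1 := (hR x1).1 h1R
    have hx3 := (hR x3).1 h3R
    exact (hR x2).2 ⟨π.trans' hx1.1 h12', lt_trans hx1.2.1 h12, lt_trans h23 hx3.2.2⟩
  · intro h2R
    have h4R := i24.1 h2R
    have hx2 := (hR x2).1 h2R
    have hx4 := (hR x4).1 h4R
    have h3R : x3 ∈ R := (hR x3).2 ⟨π.trans' (π.trans' hx2.1 (π.symm' h12')) h13,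
      lt_trans hx2.2.1 h23, lt_trans h34 hx4.2.2⟩
    exact i13.2 h3R

lemma split_move {π ρ : Setoid (Fin n)} {R : Set (Fin n)} {y t : Fin n}
    (hyR : y ∈ R) (htR : t ∉ R) (hyt : π y t) (hRX : ∀ x ∈ R, π y x)
    (hsat : ∀ u v, ρ u v → (u ∈ R ↔ v ∈ R)) :
    blocks (splitS π R) = blocks π + 1 ∧ splitS π R < π ∧
      blocks (π ⊔ ρ) + 1 ≤ blocks (splitS π R ⊔ ρ) := by
  have hns : ¬ (splitS π R) y t := fun h => htR (h.2.1 hyR)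
  have hmerge : mergeS (splitS π R) y t = π := merge_splitS hyt hyR htR hRX
  have hb : blocks (splitS π R) = blocks (mergeS (splitS π R) y t) + 1 := blocks_mergeS hns
  rw [hmerge] at hb
  have hlt : splitS π R < π := by
    refine lt_of_le_of_ne (splitS_le π R) (fun e => hns ?_)
    rw [e]; exact hyt
  refine ⟨hb, hlt, ?_⟩
  have hle2 : splitS π R ⊔ ρ ≤ splitS (π ⊔ ρ) R := by
    refine sup_le ?_ ?_
    · intro u v h
      exact ⟨(le_sup_left : π ≤ π ⊔ ρ) h.1, h.2⟩
    · intro u v h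
      exact ⟨(le_sup_right : ρ ≤ π ⊔ ρ) h, hsat u v h⟩
  have hne2 : ¬ (splitS π R ⊔ ρ) y t := fun h => htR (((hle2 h).2).1 hyR)
  have hlt2 : splitS π R ⊔ ρ < π ⊔ ρ := by
    refine lt_of_le_of_ne (sup_le_sup_right (splitS_le π R) ρ) (fun e => hne2 ?_)
    rw [e]
    exact (le_sup_left : π ≤ π ⊔ ρ) hyt
  exact blocks_lt_of_lt hlt2

/-! ### The master lemma: existence of a distance-decreasing elementary move -/

lemma master_aux {π ρ : Setoid (Fin n)} (hπ : IsNoncrossing π) (hρ : IsNoncrossing ρ)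
    {a b : Fin n} (hab : a < b) (hrho : ρ a b) (hpi : ¬ π a b)
    (hmin : ∀ a' b' : Fin n, a' < b' →
      ((ρ a' b' ∧ ¬ π a' b') ∨ (π a' b' ∧ ¬ ρ a' b')) →
      (b : ℕ) - (a : ℕ) ≤ (b' : ℕ) - (a' : ℕ)) :
    ∃ π' : Setoid (Fin n), IsNoncrossing π' ∧
      ((blocks π = blocks π' + 1 ∧ π < π' ∧ π' ⊔ ρ = π ⊔ ρ) ∨
       (blocks π' = blocks π + 1 ∧ π' < π ∧ blocks (π ⊔ ρ) + 1 ≤ blocks (π' ⊔ ρ))) := by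
  have hab' : (a : ℕ) < (b : ℕ) := hab
  have G1 : ∀ c : Fin n, a < c → c < b → ¬ ρ a c := by
    intro c hac hcb hρac
    have hac' : (a : ℕ) < (c : ℕ) := hac
    have hcb' : (c : ℕ) < (b : ℕ) := hcb
    by_cases hπac : π a c
    · have hρcb : ρ c b := ρ.trans' (ρ.symm' hρac) hrho
      have hπcb : ¬ π c b := fun h => hpi (π.trans' hπac h)
      have := hmin c b hcb (Or.inl ⟨hρcb, hπcb⟩)
      omega
    · have := hmin a c hac (Or.inl ⟨hρac, hπac⟩)
      omega
  have G2 : ∀ c : Fin n, a < c → c < b → ¬ ρ c b := by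
    intro c hac hcb hρcb
    exact G1 c hac hcb (ρ.trans' hrho (ρ.symm' hρcb))
  have G3 : ∀ c : Fin n, a < c → c < b → ¬ π a c := by
    intro c hac hcb hπac
    have hac' : (a : ℕ) < (c : ℕ) := hac
    have hcb' : (c : ℕ) < (b : ℕ) := hcb
    have := hmin a c hac (Or.inr ⟨hπac, G1 c hac hcb⟩)
    omega
  have G4 : ∀ c : Fin n, a < c → c < b → ¬ π c b := by
    intro c hac hcb hπcb
    have hac' : (a : ℕ) < (c : ℕ) := hac
    have hcb' : (c : ℕ) < (b : ℕ) := hcb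
    have := hmin c b hcb (Or.inr ⟨hπcb, G2 c hac hcb⟩)
    omega
  have key : ∀ u v : Fin n, u < v → a < u → v < b → (π u v ↔ ρ u v) := by
    intro u v huv hau hvb
    have h1 : (a : ℕ) < (u : ℕ) := hau
    have h2 : (u : ℕ) < (v : ℕ) := huv
    have h3 : (v : ℕ) < (b : ℕ) := hvb
    constructor
    · intro h
      by_contra hr
      have := hmin u v huv (Or.inr ⟨h, hr⟩)
      omega
    · intro h
      by_contra hr
      have := hmin u v huv (Or.inl ⟨h, hr⟩)
      omega
  have G5 : ∀ u v : Fin n, a < u → u < b → a < v → v < b → (π u v ↔ ρ u v) := by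
    intro u v h1 h2 h3 h4
    rcases lt_trichotomy u v with h | h | h
    · exact key u v h h1 h4
    · subst h
      exact iff_of_true (π.refl' u) (ρ.refl' u)
    · have := key v u h h3 h2
      constructor
      · intro hh; exact ρ.symm' (this.1 (π.symm' hh))
      · intro hh; exact π.symm' (this.2 (ρ.symm' hh))
  have G6 : ∀ c t' : Fin n, a < c → c < b → ρ c t' → a < t' ∧ t' < b := by
    intro c t' hac hcb hct
    have ht'a : t' ≠ a := fun e => G1 c hac hcb (ρ.symm' (e ▸ hct))
    have ht'b : t' ≠ b := fun e => G2 c hac hcb (e ▸ hct)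
    rcases lt_trichotomy t' a with h | h | h
    · exfalso
      have h1 := hρ t' a c b h hac hcb (ρ.symm' hct) hrho
      exact G1 c hac hcb (ρ.trans' (ρ.symm' h1) (ρ.symm' hct))
    · exact absurd h ht'a
    · rcases lt_trichotomy t' b with h2 | h2 | h2
      · exact ⟨h, h2⟩
      · exact absurd h2 ht'b
      · exact absurd (hρ a c b t' hac hcb h2 hrho hct) (G1 c hac hcb)
  by_cases hcase : ∃ y t' : Fin n, (a < y ∧ y < b) ∧ π y t' ∧ ¬ (a < t' ∧ t' < b)
  · -- a block of `π` exits the interval `(a,b)`: split it along the interval.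
    obtain ⟨y, t', ⟨hay, hyb⟩, hyt, htout⟩ := hcase
    set R : Set (Fin n) := {x | ρ y x} with hRdef
    have hR : ∀ x, x ∈ R ↔ (π y x ∧ a < x ∧ x < b) := by
      intro x
      constructor
      · intro hx
        have hbd := G6 y x hay hyb hx
        exact ⟨(G5 y x hay hyb hbd.1 hbd.2).2 hx, hbd⟩
      · rintro ⟨hp, h1, h2⟩
        exact (G5 y x hay hyb h1 h2).1 hp
    have hNC : IsNoncrossing (splitS π R) := splitS_noncrossing hπ hR
    have hyR : y ∈ R := ρ.refl' y
    have htR : t' ∉ R := fun h => htout ((hR t').1 h).2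
    have hRX : ∀ x ∈ R, π y x := fun x hx => ((hR x).1 hx).1
    have hsat : ∀ u v : Fin n, ρ u v → (u ∈ R ↔ v ∈ R) := by
      intro u v huv
      exact ⟨fun hu => ρ.trans' hu huv, fun hv => ρ.trans' hv (ρ.symm' huv)⟩
    obtain ⟨hb1, hlt1, hj1⟩ := split_move hyR htR hyt hRX hsat
    exact ⟨splitS π R, hNC, Or.inr ⟨hb1, hlt1, hj1⟩⟩
  · -- no block of `π` exits the interval: the elementary merge of `a,b` is noncrossing.
    push_neg at hcase
    have H3 : ∀ y t' : Fin n, a < y → y < b → π y t' → a < t' ∧ t' < b := fun y t' h1 h2 h3 =>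
      hcase y t' ⟨h1, h2⟩ h3
    have hNC : IsNoncrossing (mergeS π a b) := by
      intro x1 x2 x3 x4 h12 h23 h34 H13 H24
      rcases H13 with h13 | ⟨h1a, hb3⟩ | ⟨h1b, ha3⟩ <;>
        rcases H24 with h24 | ⟨h2a, hb4⟩ | ⟨h2b, ha4⟩
      · exact Or.inl (hπ x1 x2 x3 x4 h12 h23 h34 h13 h24)
      · by_cases h1a' : π x1 a
        · exact Or.inl (π.trans' h1a' (π.symm' h2a))
        by_cases h1b' : π x1 b
        · exact Or.inr (Or.inr ⟨h1b', π.symm' h2a⟩)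
        rcases lt_trichotomy a x1 with h | h | h
        · exact absurd (π.symm' (hπ a x1 x2 x3 h h12 h23 (π.symm' h2a) h13)) h1a'
        · exact absurd (show π x1 a by rw [← h]) h1a'
        · rcases lt_trichotomy a x3 with h' | h' | h'
          · rcases lt_trichotomy b x3 with h'' | h'' | h''
            · exact absurd (hπ x1 b x3 x4 (lt_trans h hab) h'' h34 h13 hb4) h1b'
            · exact absurd (show π x1 b by rw [h'']; exact h13) h1b'
            · exact absurd (H3 x3 x1 h' h'' (π.symm' h13)).1 (lt_asymm h)
          · exact absurd (show π x1 a by rw [h']; exact h13) h1a'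
          · exact Or.inl (hπ x1 x2 x3 a h12 h23 h' h13 h2a)
      · by_cases h1b' : π x1 b
        · exact Or.inl (π.trans' h1b' (π.symm' h2b))
        by_cases h1a' : π x1 a
        · exact Or.inr (Or.inl ⟨h1a', π.symm' h2b⟩)
        rcases lt_trichotomy b x1 with h | h | h
        · exact absurd (π.symm' (hπ b x1 x2 x3 h h12 h23 (π.symm' h2b) h13)) h1b'
        · exact absurd (show π x1 b by rw [← h]) h1b'
        · rcases lt_trichotomy b x3 with h' | h' | h'
          · rcases lt_trichotomy x1 a with h'' | h'' | h''
            · exact absurd (hπ x1 a x3 x4 h'' (lt_trans hab h') h34 h13 ha4) h1a'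
            · exact absurd (show π x1 a by rw [h'']) h1a'
            · exact absurd (H3 x1 x3 h'' h h13).2 (lt_asymm h')
          · exact absurd (show π x1 b by rw [h']; exact h13) h1b'
          · exact Or.inl (hπ x1 x2 x3 b h12 h23 h' h13 h2b)
      · by_cases h2a' : π x2 a
        · exact Or.inl (π.trans' h1a (π.symm' h2a'))
        by_cases h2b' : π x2 b
        · exact Or.inr (Or.inl ⟨h1a, π.symm' h2b'⟩)
        rcases lt_trichotomy a x2 with h | h | h
        · rcases lt_trichotomy b x2 with h' | h' | h'
          · exact absurd (π.symm' (hπ b x2 x3 x4 h' h23 h34 hb3 h24)) h2b'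
          · exact absurd (show π x2 b by rw [← h']) h2b'
          · have hx4 := H3 x2 x4 h h' h24
            have hx3b : x3 < b := lt_trans h34 hx4.2
            exact absurd (π.symm' hb3) (G4 x3 (lt_trans h h23) hx3b)
        · exact absurd (show π x2 a by rw [← h]) h2a'
        · rcases lt_trichotomy a x4 with h' | h' | h'
          · exact Or.inl (hπ x1 x2 a x4 h12 h h' h1a h24)
          · exact absurd (show π x2 a by rw [h']; exact h24) h2a'
          · have hp23 := hπ x2 x3 x4 b h23 h34 (lt_trans h' hab) h24 (π.symm' hb3)
            exact absurd (π.trans' hp23 (π.symm' hb3)) h2b'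
      · exact Or.inl (π.trans' h1a (π.symm' h2a))
      · exact Or.inr (Or.inl ⟨h1a, π.symm' h2b⟩)
      · by_cases h2b' : π x2 b
        · exact Or.inl (π.trans' h1b (π.symm' h2b'))
        by_cases h2a' : π x2 a
        · exact Or.inr (Or.inr ⟨h1b, π.symm' h2a'⟩)
        rcases lt_trichotomy a x2 with h | h | h
        · exact absurd (π.symm' (hπ a x2 x3 x4 h h23 h34 ha3 h24)) h2a'
        · exact absurd (show π x2 a by rw [← h]) h2a'
        · rcases lt_trichotomy a x4 with h' | h' | h'
          · rcases lt_trichotomy b x4 with h'' | h'' | h''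
            · exact Or.inl (hπ x1 x2 b x4 h12 (lt_trans h hab) h'' h1b h24)
            · exact absurd (show π x2 b by rw [h'']; exact h24) h2b'
            · exact absurd (H3 x4 x2 h' h'' (π.symm' h24)).1 (lt_asymm h)
          · exact absurd (show π x2 a by rw [h']; exact h24) h2a'
          · have hp23 := hπ x2 x3 x4 a h23 h34 h' h24 (π.symm' ha3)
            exact absurd (π.trans' hp23 (π.symm' ha3)) h2a'
      · exact Or.inr (Or.inr ⟨h1b, π.symm' h2a⟩)
      · exact Or.inl (π.trans' h1b (π.symm' h2b))
    have hble : blocks π = blocks (mergeS π a b) + 1 := blocks_mergeS hpi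
    have hltm : π < mergeS π a b := lt_mergeS hpi
    have hsup : mergeS π a b ⊔ ρ = π ⊔ ρ := by
      apply le_antisymm
      · exact sup_le (mergeS_le le_sup_left ((le_sup_right : ρ ≤ π ⊔ ρ) hrho)) le_sup_right
      · exact sup_le (le_trans (le_mergeS π a b) le_sup_left) le_sup_right
    exact ⟨mergeS π a b, hNC, Or.inl ⟨hble, hltm, hsup⟩⟩


/-! ### Existence of a minimal discrepancy pair -/

lemma exists_min_discrepancy {π ρ : Setoid (Fin n)} (hne : π ≠ ρ) :
    ∃ a b : Fin n, a < b ∧ ((ρ a b ∧ ¬ π a b) ∨ (π a b ∧ ¬ ρ a b)) ∧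
      (∀ a' b' : Fin n, a' < b' →
        ((ρ a' b' ∧ ¬ π a' b') ∨ (π a' b' ∧ ¬ ρ a' b')) →
        (b : ℕ) - (a : ℕ) ≤ (b' : ℕ) - (a' : ℕ)) := by
  classical
  have hex : ∃ k : ℕ, ∃ a b : Fin n, a < b ∧ ((b : ℕ) - (a : ℕ) = k) ∧
      ((ρ a b ∧ ¬ π a b) ∨ (π a b ∧ ¬ ρ a b)) := by
    have hdis : ∃ u v : Fin n, ¬ (π u v ↔ ρ u v) := by
      by_contra h
      push_neg at h
      exact hne (Setoid.ext fun u v => h u v)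
    obtain ⟨u, v, huv⟩ := hdis
    have hune : u ≠ v := by
      rintro rfl
      exact huv (iff_of_true (π.refl' u) (ρ.refl' u))
    have hd : (ρ u v ∧ ¬ π u v) ∨ (π u v ∧ ¬ ρ u v) := by tauto
    rcases lt_or_gt_of_ne hune with h | h
    · exact ⟨(v : ℕ) - (u : ℕ), u, v, h, rfl, hd⟩
    · refine ⟨(u : ℕ) - (v : ℕ), v, u, h, rfl, ?_⟩
      rcases hd with ⟨g1, g2⟩ | ⟨g1, g2⟩
      · exact Or.inl ⟨ρ.symm' g1, fun hh => g2 (π.symm' hh)⟩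
      · exact Or.inr ⟨π.symm' g1, fun hh => g2 (ρ.symm' hh)⟩
  obtain ⟨a, b, hab, hk, hd⟩ := Nat.find_spec hex
  refine ⟨a, b, hab, hd, ?_⟩
  intro a' b' hab' hd'
  rw [hk]
  exact Nat.find_min' hex ⟨a', b', hab', rfl, hd'⟩

/-! ### Upper bound: construction of short walks -/

lemma upper : ∀ k : ℕ, ∀ x y : NC n,
    blocks x.1 + blocks y.1 = k + 2 * blocks (x.1 ⊔ y.1) →
    ∃ w : (hasse n).Walk x y, w.length ≤ k := by
  intro k
  induction k using Nat.strong_induction_on with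
  | _ k ih =>
    intro x y hk
    by_cases hxy : x = y
    · subst hxy; exact ⟨SimpleGraph.Walk.nil, by simp⟩
    have hne : x.1 ≠ y.1 := fun e => hxy (Subtype.ext e)
    have hkpos : 1 ≤ k := by
      by_contra hk0
      have hk00 : k = 0 := by omega
      subst hk00
      have h1 : blocks (x.1 ⊔ y.1) ≤ blocks x.1 := blocks_sup_le_left _ _
      have h2 : blocks (x.1 ⊔ y.1) ≤ blocks y.1 := blocks_sup_le_right _ _
      have hx : x.1 = x.1 ⊔ y.1 := eq_of_le_of_blocks le_sup_left (by omega)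
      have hy : y.1 = x.1 ⊔ y.1 := eq_of_le_of_blocks le_sup_right (by omega)
      exact hne (hx.trans hy.symm)
    obtain ⟨a, b, hab, hd, hmin⟩ := exists_min_discrepancy hne
    rcases hd with ⟨h1, h2⟩ | ⟨h1, h2⟩
    · -- move on the `x` side
      obtain ⟨π', hNC', hmove⟩ := master_aux x.2 y.2 hab h1 h2 hmin
      rcases hmove with ⟨hb1, hlt1, hsup1⟩ | ⟨hb1, hlt1, hj1⟩
      · have hcov : x ⋖ (⟨π', hNC'⟩ : NC n) := cover_of_blocks hlt1 hb1
        have hk' : blocks π' + blocks y.1 = (k - 1) + 2 * blocks (π' ⊔ y.1) := by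
          rw [hsup1]; omega
        obtain ⟨w, hw⟩ := ih (k - 1) (by omega) ⟨π', hNC'⟩ y hk'
        exact ⟨SimpleGraph.Walk.cons (show (hasse n).Adj x ⟨π', hNC'⟩ from Or.inl hcov) w,
          by simp only [SimpleGraph.Walk.length_cons]; omega⟩
      · have hcov : (⟨π', hNC'⟩ : NC n) ⋖ x := cover_of_blocks hlt1 hb1
        have hle1 : blocks (π' ⊔ y.1) ≤ blocks π' := blocks_sup_le_left _ _
        have hle2 : blocks (π' ⊔ y.1) ≤ blocks y.1 := blocks_sup_le_right _ _
        have hk' : blocks π' + blocks y.1 =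
            (blocks π' + blocks y.1 - 2 * blocks (π' ⊔ y.1)) + 2 * blocks (π' ⊔ y.1) := by
          omega
        have hklt : blocks π' + blocks y.1 - 2 * blocks (π' ⊔ y.1) < k := by omega
        obtain ⟨w, hw⟩ := ih _ hklt ⟨π', hNC'⟩ y hk'
        exact ⟨SimpleGraph.Walk.cons (show (hasse n).Adj x ⟨π', hNC'⟩ from Or.inr hcov) w,
          by simp only [SimpleGraph.Walk.length_cons]; omega⟩
    · -- move on the `y` side
      obtain ⟨ρ', hNC', hmove⟩ :=
        master_aux y.2 x.2 hab h1 h2 (fun a' b' h hd' => hmin a' b' h hd'.symm)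
      rcases hmove with ⟨hb1, hlt1, hsup1⟩ | ⟨hb1, hlt1, hj1⟩
      · have hcov : y ⋖ (⟨ρ', hNC'⟩ : NC n) := cover_of_blocks hlt1 hb1
        have hsup' : x.1 ⊔ ρ' = x.1 ⊔ y.1 := by
          rw [sup_comm x.1 ρ', hsup1, sup_comm]
        have hk' : blocks x.1 + blocks ρ' = (k - 1) + 2 * blocks (x.1 ⊔ ρ') := by
          rw [hsup']; omega
        obtain ⟨w, hw⟩ := ih (k - 1) (by omega) x ⟨ρ', hNC'⟩ hk'
        exact ⟨w.concat (show (hasse n).Adj ⟨ρ', hNC'⟩ y from Or.inr hcov), by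
          simp only [SimpleGraph.Walk.length_concat]; omega⟩
      · have hcov : (⟨ρ', hNC'⟩ : NC n) ⋖ y := cover_of_blocks hlt1 hb1
        have hsup' : blocks (y.1 ⊔ x.1) + 1 ≤ blocks (x.1 ⊔ ρ') := by
          rw [sup_comm x.1 ρ']; exact hj1
        have hyx : y.1 ⊔ x.1 = x.1 ⊔ y.1 := sup_comm y.1 x.1
        rw [hyx] at hsup'
        have hle1 : blocks (x.1 ⊔ ρ') ≤ blocks x.1 := blocks_sup_le_left _ _
        have hle2 : blocks (x.1 ⊔ ρ') ≤ blocks ρ' := blocks_sup_le_right _ _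
        have hk' : blocks x.1 + blocks ρ' =
            (blocks x.1 + blocks ρ' - 2 * blocks (x.1 ⊔ ρ')) + 2 * blocks (x.1 ⊔ ρ') := by
          omega
        have hklt : blocks x.1 + blocks ρ' - 2 * blocks (x.1 ⊔ ρ') < k := by omega
        obtain ⟨w, hw⟩ := ih _ hklt x ⟨ρ', hNC'⟩ hk'
        exact ⟨w.concat (show (hasse n).Adj ⟨ρ', hNC'⟩ y from Or.inl hcov), by
          simp only [SimpleGraph.Walk.length_concat]; omega⟩

end NCAux

/-- `d_H(π,ρ) = |π| + |ρ| - 2·|π ∨̃ ρ|`, where `∨̃` is the join in the full lattice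
of set partitions (setoids) of `{1,...,n}` (stated additively). -/
theorem dist_eq_blocks_sub_fullJoin (n : ℕ) (π ρ : NC n) :
    (hasse n).dist π ρ + 2 * blocks (π.1 ⊔ ρ.1) = blocks π.1 + blocks ρ.1 := by
  classical
  have hj1 : blocks (π.1 ⊔ ρ.1) ≤ blocks π.1 := NCAux.blocks_sup_le_left _ _
  have hj2 : blocks (π.1 ⊔ ρ.1) ≤ blocks ρ.1 := NCAux.blocks_sup_le_right _ _
  obtain ⟨w, hw⟩ := NCAux.upper (blocks π.1 + blocks ρ.1 - 2 * blocks (π.1 ⊔ ρ.1)) π ρ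
    (by omega)
  have hdle : (hasse n).dist π ρ ≤ blocks π.1 + blocks ρ.1 - 2 * blocks (π.1 ⊔ ρ.1) :=
    le_trans (SimpleGraph.dist_le w) hw
  have hreach : (hasse n).Reachable π ρ := ⟨w⟩
  obtain ⟨p, hp⟩ := hreach.exists_walk_length_eq_dist
  have hlow := NCAux.lower_walk ρ.1 p
  rw [sup_idem, hp] at hlow
  omega
end

section
/- If π is an interval partition of {1,...,n} (or more generally a cyclic shift of one) and ρ ∈ NC(n) is any non-crossing partition, then the join of π and ρ in the full partition lattice is itself non-crossing, and hence equals the join of π and ρ in the lattice NC(n). -/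
/-- An interval partition: every block is an interval of consecutive elements. -/
def IsIntervalPartition {n : ℕ} (s : Setoid (Fin n)) : Prop :=
  ∀ a b c : Fin n, a ≤ b → b ≤ c → s.r a c → s.r a b

/-- A cyclic shift of an interval partition: for some shift `k`, pulling the
partition back along `i ↦ i + k` yields an interval partition. -/
def IsCyclicIntervalPartition {n : ℕ} (s : Setoid (Fin n)) : Prop :=
  ∃ k : Fin n, IsIntervalPartition (Setoid.comap (fun i => i + k) s)

/-! ### Auxiliary machinery -/

section Aux

variable {n : ℕ}

/-- Merge all blocks of `ρ` meeting `S` into a single block. -/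
def mergeSetoid (ρ : Setoid (Fin n)) (S : Set (Fin n)) : Setoid (Fin n) where
  r a b := ρ.r a b ∨ ((∃ x ∈ S, ρ.r a x) ∧ (∃ x ∈ S, ρ.r b x))
  iseqv := by
    refine ⟨fun a => Or.inl (ρ.refl' a), ?_, ?_⟩
    · rintro a b (h | ⟨h1, h2⟩)
      · exact Or.inl (ρ.symm' h)
      · exact Or.inr ⟨h2, h1⟩
    · rintro a b c (h | ⟨ha, hb⟩) (h' | ⟨hb', hc'⟩)
      · exact Or.inl (ρ.trans' h h')
      · exact Or.inr ⟨hb'.imp fun y hy => ⟨hy.1, ρ.trans' h hy.2⟩, hc'⟩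
      · exact Or.inr ⟨ha, hb.imp fun y hy => ⟨hy.1, ρ.trans' (ρ.symm' h') hy.2⟩⟩
      · exact Or.inr ⟨ha, hc'⟩

theorem mergeSetoid_r {ρ : Setoid (Fin n)} {S : Set (Fin n)} {a b : Fin n} :
    (mergeSetoid ρ S).r a b ↔ ρ.r a b ∨ ((∃ x ∈ S, ρ.r a x) ∧ (∃ x ∈ S, ρ.r b x)) :=
  Iff.rfl

/-- The partition with a single (possibly) nontrivial block `S`. -/
def atomSetoid (S : Set (Fin n)) : Setoid (Fin n) where
  r a b := a = b ∨ (a ∈ S ∧ b ∈ S)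
  iseqv := by
    refine ⟨fun a => Or.inl rfl, ?_, ?_⟩
    · rintro a b (rfl | ⟨h1, h2⟩)
      · exact Or.inl rfl
      · exact Or.inr ⟨h2, h1⟩
    · rintro a b c (rfl | ⟨h1, h2⟩) (rfl | ⟨h1', h2'⟩)
      · exact Or.inl rfl
      · exact Or.inr ⟨h1', h2'⟩
      · exact Or.inr ⟨h1, h2⟩
      · exact Or.inr ⟨h1, h2'⟩

theorem atom_sup (ρ : Setoid (Fin n)) (S : Set (Fin n)) :
    atomSetoid S ⊔ ρ = mergeSetoid ρ S := by
  apply le_antisymm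
  · apply sup_le
    · rw [Setoid.le_def]
      rintro a b (rfl | ⟨ha, hb⟩)
      · exact Or.inl (ρ.refl' a)
      · exact Or.inr ⟨⟨a, ha, ρ.refl' a⟩, ⟨b, hb, ρ.refl' b⟩⟩
    · rw [Setoid.le_def]
      exact fun {a b} h => Or.inl h
  · rw [Setoid.le_def]
    rintro a b (h | ⟨⟨x, hx, hax⟩, ⟨y, hy, hby⟩⟩)
    · exact Setoid.le_def.mp le_sup_right h
    · have h1 : (atomSetoid S ⊔ ρ) a x := Setoid.le_def.mp le_sup_right hax
      have h2 : (atomSetoid S ⊔ ρ) x y := Setoid.le_def.mp le_sup_left (Or.inr ⟨hx, hy⟩)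
      have h3 : (atomSetoid S ⊔ ρ) y b :=
        Setoid.le_def.mp le_sup_right (ρ.symm' hby)
      exact Setoid.trans' _ (Setoid.trans' _ h1 h2) h3

/-- Order-convex subsets. -/
def OrdConvex (S : Set (Fin n)) : Prop :=
  ∀ ⦃a b c : Fin n⦄, a ≤ b → b ≤ c → a ∈ S → c ∈ S → b ∈ S

theorem ordConvex_trichotomy {S : Set (Fin n)} (hS : OrdConvex S) {z : Fin n} (hz : z ∉ S) :
    (∀ w ∈ S, z < w) ∨ (∀ w ∈ S, w < z) := by
  by_cases h : ∃ w ∈ S, w < z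
  · right
    intro w hw
    rcases lt_trichotomy w z with h' | h' | h'
    · exact h'
    · exact absurd (h' ▸ hw) hz
    · obtain ⟨u, hu, huz⟩ := h
      exact absurd (hS huz.le h'.le hu hw) hz
  · left
    intro w hw
    push_neg at h
    exact lt_of_le_of_ne (h w hw) fun e => hz (e ▸ hw)

theorem merge_noncrossing {ρ : Setoid (Fin n)} {S : Set (Fin n)} (hρ : IsNoncrossing ρ)
    (hS : OrdConvex S) : IsNoncrossing (mergeSetoid ρ S) := by
  intro a b c d hab hbc hcd hac hbd
  rw [mergeSetoid_r] at hac hbd ⊢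
  rcases hac with hac | ⟨⟨x, hxS, hax⟩, ⟨y, hyS, hcy⟩⟩
  · rcases hbd with hbd | ⟨hMb, hMd⟩
    · exact Or.inl (hρ a b c d hab hbc hcd hac hbd)
    · by_cases hMa : ∃ x ∈ S, ρ.r a x
      · exact Or.inr ⟨hMa, hMb⟩
      · obtain ⟨x, hxS, hbx⟩ := hMb
        have hcS : c ∉ S := fun h => hMa ⟨c, h, hac⟩
        rcases ordConvex_trichotomy hS hcS with hlt | hgt
        · exact Or.inl (hρ a b c x hab hbc (hlt x hxS) hac hbx)
        · obtain ⟨y, hyS, hdy⟩ := hMd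
          have hyc : y < c := hgt y hyS
          rcases lt_trichotomy a y with hay | hay | hya
          · exact absurd ⟨y, hyS, hρ a y c d hay hyc hcd hac (ρ.symm' hdy)⟩ hMa
          · exact absurd ⟨y, hyS, hay ▸ ρ.refl' a⟩ hMa
          · rcases lt_trichotomy x a with hxa | hxa | hxa
            · exact absurd
                ⟨x, hxS, ρ.symm' (hρ x a b c hxa hab hbc (ρ.symm' hbx) hac)⟩ hMa
            · exact Or.inl (ρ.symm' (hxa ▸ hbx))
            · exact absurd ⟨a, hS hya.le hxa.le hyS hxS, ρ.refl' a⟩ hMa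
  · by_cases hMb : ∃ z ∈ S, ρ.r b z
    · exact Or.inr ⟨⟨x, hxS, hax⟩, hMb⟩
    · rcases hbd with hbd | ⟨hMb', _⟩
      · have hbS : b ∉ S := fun h => hMb ⟨b, h, ρ.refl' b⟩
        rcases ordConvex_trichotomy hS hbS with hblt | hbgt
        · have hdS : d ∉ S := fun h => hMb ⟨d, h, hbd⟩
          rcases ordConvex_trichotomy hS hdS with hdlt | hdgt
          · exact absurd
              ⟨y, hyS, ρ.trans' (hρ b c d y hbc hcd (hdlt y hyS) hbd hcy) hcy⟩ hMb
          · exact Or.inl (hρ a b x d hab (hblt x hxS) (hdgt x hxS) hax hbd)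
        · exact absurd
            ⟨y, hyS, ρ.symm' (hρ y b c d (hbgt y hyS) hbc hcd (ρ.symm' hcy) hbd)⟩ hMb
      · exact absurd hMb' hMb

theorem interval_sup_noncrossing {π ρ : Setoid (Fin n)} (hπ : IsIntervalPartition π)
    (hρ : IsNoncrossing ρ) : IsNoncrossing (π ⊔ ρ) := by
  classical
  have hconv : ∀ j : Fin n, OrdConvex {x : Fin n | π.r x j} := by
    intro j a b c hab hbc ha hc
    have hac : π.r a c := π.trans' ha (π.symm' hc)
    have hab' : π.r a b := hπ a b c hab hbc hac
    exact π.trans' (π.symm' hab') ha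
  have key : ∀ F : Finset (Fin n),
      IsNoncrossing (F.sup (fun j => atomSetoid {x : Fin n | π.r x j}) ⊔ ρ) := by
    intro F
    induction F using Finset.induction_on with
    | empty => simpa using hρ
    | @insert a F ha ih =>
      rw [Finset.sup_insert, sup_assoc, atom_sup]
      exact merge_noncrossing ih (hconv a)
  have hπ_eq : Finset.univ.sup (fun j => atomSetoid {x : Fin n | π.r x j}) = π := by
    apply le_antisymm
    · apply Finset.sup_le
      intro j _
      rw [Setoid.le_def]
      rintro a b (rfl | ⟨ha, hb⟩)
      · exact π.refl' a
      · exact π.trans' ha (π.symm' hb)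
    · rw [Setoid.le_def]
      intro a b hab
      exact Setoid.le_def.mp (Finset.le_sup (Finset.mem_univ a))
        (Or.inr ⟨π.refl' a, π.symm' hab⟩)
  have := key Finset.univ
  rwa [hπ_eq] at this

theorem noncrossing_comap_add {s : Setoid (Fin n)} (hs : IsNoncrossing s) (k : Fin n) :
    IsNoncrossing (Setoid.comap (fun i => i + k) s) := by
  intro a b c d hab hbc hcd h1 h2
  have h1' : s.r (a + k) (c + k) := h1
  have h2' : s.r (b + k) (d + k) := h2
  show s.r (a + k) (b + k)
  have hv : ∀ u : Fin n, u.1 + k.1 < n → (u + k).1 = u.1 + k.1 := by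
    intro u hu
    rw [Fin.add_def]
    exact Nat.mod_eq_of_lt hu
  have hw : ∀ u : Fin n, n ≤ u.1 + k.1 → (u + k).1 = u.1 + k.1 - n := by
    intro u hu
    have h2n : u.1 + k.1 - n < n := by
      have := u.isLt; have := k.isLt; omega
    have hmod : (u.1 + k.1) % n = u.1 + k.1 - n := by
      rw [Nat.mod_eq_sub_mod hu, Nat.mod_eq_of_lt h2n]
    rw [Fin.add_def]
    exact hmod
  have hab' : a.1 < b.1 := hab
  have hbc' : b.1 < c.1 := hbc
  have hcd' : c.1 < d.1 := hcd
  by_cases wa : n ≤ a.1 + k.1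
  · -- all wrap
    have va := hw a wa; have vb := hw b (by omega); have vc := hw c (by omega)
    have vd := hw d (by omega)
    refine hs (a + k) (b + k) (c + k) (d + k) ?_ ?_ ?_ h1' h2' <;>
      rw [Fin.lt_def] <;> omega
  · by_cases wb : n ≤ b.1 + k.1
    · -- b, c, d wrap : b' < c' < d' < a'
      have va := hv a (by omega); have vb := hw b wb; have vc := hw c (by omega)
      have vd := hw d (by omega)
      have hX : s.r (b + k) (c + k) := by
        refine hs (b + k) (c + k) (d + k) (a + k) ?_ ?_ ?_ h2' (s.symm' h1') <;>
          rw [Fin.lt_def] <;> (have := a.isLt; have := k.isLt; omega)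
      exact s.trans' h1' (s.symm' hX)
    · by_cases wc : n ≤ c.1 + k.1
      · -- c, d wrap : c' < d' < a' < b'
        have va := hv a (by omega); have vb := hv b (by omega); have vc := hw c wc
        have vd := hw d (by omega)
        have hX : s.r (c + k) (d + k) := by
          refine hs (c + k) (d + k) (a + k) (b + k) ?_ ?_ ?_ (s.symm' h1') (s.symm' h2') <;>
            rw [Fin.lt_def] <;> (have := b.isLt; have := k.isLt; omega)
        exact s.trans' h1' (s.trans' hX (s.symm' h2'))
      · by_cases wd : n ≤ d.1 + k.1
        · -- only d wraps : d' < a' < b' < c'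
          have va := hv a (by omega); have vb := hv b (by omega)
          have vc := hv c (by omega); have vd := hw d wd
          have hX : s.r (d + k) (a + k) := by
            refine hs (d + k) (a + k) (b + k) (c + k) ?_ ?_ ?_ (s.symm' h2') h1' <;>
              rw [Fin.lt_def] <;> (have := c.isLt; have := k.isLt; omega)
          exact s.trans' (s.symm' hX) (s.symm' h2')
        · -- none wrap
          have va := hv a (by omega); have vb := hv b (by omega)
          have vc := hv c (by omega); have vd := hv d (by omega)
          refine hs (a + k) (b + k) (c + k) (d + k) ?_ ?_ ?_ h1' h2' <;>
            rw [Fin.lt_def] <;> omega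

/-- `Setoid.comap` along an equivalence, as an order isomorphism. -/
def comapOrderIso {α β : Type*} (e : α ≃ β) : Setoid β ≃o Setoid α where
  toFun s := Setoid.comap e s
  invFun s := Setoid.comap e.symm s
  left_inv s := Setoid.ext fun a b => by
    simp [Setoid.comap_rel]
  right_inv s := Setoid.ext fun a b => by
    simp [Setoid.comap_rel]
  map_rel_iff' := by
    intro s t
    constructor
    · intro h x y hst
      have h1 : (Setoid.comap e s) (e.symm x) (e.symm y) := by
        show s.r (e (e.symm x)) (e (e.symm y))
        simpa using hst
      have h2 := h h1
      have : t.r (e (e.symm x)) (e (e.symm y)) := h2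
      simpa using this
    · intro h x y hs
      exact h hs

theorem comap_sup_eq {α β : Type*} (e : α ≃ β) (s t : Setoid β) :
    Setoid.comap e (s ⊔ t) = Setoid.comap e s ⊔ Setoid.comap e t :=
  (comapOrderIso e).map_sup s t

end Aux

/-- If `π` is a cyclic shift of an interval partition and `ρ ∈ NC(n)`, then the
join of `π` and `ρ` in the full partition lattice is itself non-crossing, and it
is the join of `π` and `ρ` in `NC(n)`. -/
theorem fullJoin_noncrossing (n : ℕ) (π ρ : NC n)
    (hπ : IsCyclicIntervalPartition π.1) :
    ∃ h : IsNoncrossing (π.1 ⊔ ρ.1), IsLUB {π, ρ} (⟨π.1 ⊔ ρ.1, h⟩ : NC n) := by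
  obtain ⟨k, hk⟩ := hπ
  haveI : NeZero n := ⟨k.pos.ne'⟩
  have hρ' : IsNoncrossing (Setoid.comap (fun i => i + k) ρ.1) :=
    noncrossing_comap_add ρ.2 k
  have hsup : IsNoncrossing (Setoid.comap (fun i => i + k) (π.1 ⊔ ρ.1)) := by
    have heq : Setoid.comap (fun i => i + k) (π.1 ⊔ ρ.1) =
        Setoid.comap (fun i => i + k) π.1 ⊔ Setoid.comap (fun i => i + k) ρ.1 :=
      comap_sup_eq (Equiv.addRight k) π.1 ρ.1
    rw [heq]
    exact interval_sup_noncrossing hk hρ'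
  have hNC : IsNoncrossing (π.1 ⊔ ρ.1) := by
    have h2 := noncrossing_comap_add hsup (-k)
    have he : Setoid.comap (fun i => i + (-k))
        (Setoid.comap (fun i => i + k) (π.1 ⊔ ρ.1)) = π.1 ⊔ ρ.1 := by
      refine Setoid.ext fun a b => ?_
      show (π.1 ⊔ ρ.1).r (a + -k + k) (b + -k + k) ↔ _
      rw [neg_add_cancel_right, neg_add_cancel_right]
    rwa [he] at h2
  refine ⟨hNC, ?_, ?_⟩
  · intro x hx
    rcases hx with rfl | rfl
    · exact Subtype.coe_le_coe.mp le_sup_left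
    · exact Subtype.coe_le_coe.mp le_sup_right
  · intro z hz
    have h1 : π ≤ z := hz (Set.mem_insert _ _)
    have h2 : ρ ≤ z := hz (Set.mem_insert_of_mem _ rfl)
    exact Subtype.coe_le_coe.mp (sup_le (Subtype.coe_le_coe.mpr h1) (Subtype.coe_le_coe.mpr h2))
end

section
/- If π ∈ NC(n) satisfies π ∨̃ ρ = π ∨ ρ for every ρ ∈ NC(n) (i.e., the full-lattice join with every non-crossing partition is non-crossing), then π is a cyclic shift of an interval partition. -/
section Aux
variable {n : ℕ}

/-- The setoid pairing `u` and `v` and leaving everything else alone. -/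
def pairSetoid (u v : Fin n) : Setoid (Fin n) where
  r x y := x = y ∨ (x = u ∧ y = v) ∨ (x = v ∧ y = u)
  iseqv := by
    constructor
    · intro x; exact Or.inl rfl
    · intro x y hxy; rcases hxy with rfl | ⟨rfl, rfl⟩ | ⟨rfl, rfl⟩ <;> tauto
    · intro x y z h1 h2
      rcases h1 with rfl | ⟨rfl, rfl⟩ | ⟨rfl, rfl⟩ <;>
        rcases h2 with h2 | ⟨h2a, h2b⟩ | ⟨h2a, h2b⟩ <;> aesop

lemma pairSetoid_nc {u v : Fin n} (huv : u < v) : IsNoncrossing (pairSetoid u v) := by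
  intro a b c d hab hbc hcd h1 h2
  rcases h1 with rfl | ⟨rfl, rfl⟩ | ⟨rfl, rfl⟩ <;>
    rcases h2 with rfl | ⟨rfl, rfl⟩ | ⟨rfl, rfl⟩ <;>
    simp only [Fin.lt_def] at * <;> omega

lemma join_pair_le (p : Setoid (Fin n)) (u v : Fin n) :
    ∀ x y : Fin n, (p ⊔ pairSetoid u v).r x y →
      p.r x y ∨ (p.r x u ∧ p.r v y) ∨ (p.r x v ∧ p.r u y) := by
  set J : Setoid (Fin n) :=
    { r := fun x y => p.r x y ∨ (p.r x u ∧ p.r v y) ∨ (p.r x v ∧ p.r u y)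
      iseqv := by
        constructor
        · intro x; exact Or.inl (p.refl x)
        · rintro x y (hxy | ⟨h1, h2⟩ | ⟨h1, h2⟩)
          · exact Or.inl (p.symm hxy)
          · exact Or.inr (Or.inr ⟨p.symm h2, p.symm h1⟩)
          · exact Or.inr (Or.inl ⟨p.symm h2, p.symm h1⟩)
        · rintro x y z (h1 | ⟨h1, h2⟩ | ⟨h1, h2⟩) (g1 | ⟨g1, g2⟩ | ⟨g1, g2⟩)
          · exact Or.inl (p.trans h1 g1)
          · exact Or.inr (Or.inl ⟨p.trans h1 g1, g2⟩)
          · exact Or.inr (Or.inr ⟨p.trans h1 g1, g2⟩)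
          · exact Or.inr (Or.inl ⟨h1, p.trans h2 g1⟩)
          · exact Or.inl (p.trans (p.trans h1 (p.symm (p.trans h2 g1))) g2)
          · exact Or.inl (p.trans h1 g2)
          · exact Or.inr (Or.inr ⟨h1, p.trans h2 g1⟩)
          · exact Or.inl (p.trans h1 g2)
          · exact Or.inl (p.trans (p.trans h1 (p.symm (p.trans h2 g1))) g2) } with hJ
  have hle : p ⊔ pairSetoid u v ≤ J := by
    apply sup_le
    · intro x y hxy; exact Or.inl hxy
    · rintro x y (rfl | ⟨rfl, rfl⟩ | ⟨rfl, rfl⟩)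
      · exact Or.inl (p.refl x)
      · exact Or.inr (Or.inl ⟨p.refl _, p.refl _⟩)
      · exact Or.inr (Or.inr ⟨p.refl _, p.refl _⟩)
  intro x y hxy
  exact hle hxy

variable {π : NC n} (h : ∀ ρ : NC n, IsNoncrossing (π.1 ⊔ ρ.1))

include h in
/-- Star property: if `a ~ c` with `a<b<c<d` then `a ~ b` or `a ~ d`. -/
lemma nc_star {a b c d : Fin n} (hab : a < b) (hbc : b < c) (hcd : c < d)
    (hac : π.1.r a c) : π.1.r a b ∨ π.1.r a d := by
  have hbd : b < d := hbc.trans hcd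
  set ρ : NC n := ⟨pairSetoid b d, pairSetoid_nc hbd⟩ with hρ
  have h1 : (π.1 ⊔ ρ.1).r a c := le_sup_left (a := π.1) (b := ρ.1) hac
  have h2 : (π.1 ⊔ ρ.1).r b d :=
    le_sup_right (a := π.1) (b := ρ.1) (Or.inr (Or.inl ⟨rfl, rfl⟩))
  have hj := h ρ a b c d hab hbc hcd h1 h2
  rcases join_pair_le π.1 b d a b hj with hz | ⟨hz, _⟩ | ⟨hz, _⟩
  · exact Or.inl hz
  · exact Or.inl hz
  · exact Or.inr hz

include h in
/-- Co-star property: if `b ~ d` with `a<b<c<d` then `a ~ b` or `b ~ c`. -/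
lemma nc_starstar {a b c d : Fin n} (hab : a < b) (hbc : b < c) (hcd : c < d)
    (hbd : π.1.r b d) : π.1.r a b ∨ π.1.r b c := by
  have hac : a < c := hab.trans hbc
  set ρ : NC n := ⟨pairSetoid a c, pairSetoid_nc hac⟩ with hρ
  have h1 : (π.1 ⊔ ρ.1).r a c :=
    le_sup_right (a := π.1) (b := ρ.1) (Or.inr (Or.inl ⟨rfl, rfl⟩))
  have h2 : (π.1 ⊔ ρ.1).r b d := le_sup_left (a := π.1) (b := ρ.1) hbd
  have hj := h ρ a b c d hab hbc hcd h1 h2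
  rcases join_pair_le π.1 a c a b hj with hz | ⟨_, hz⟩ | ⟨_, hz⟩
  · exact Or.inl hz
  · exact Or.inr (π.1.iseqv.symm hz)
  · exact Or.inl hz

variable {km kk : Fin n} (hkmk : km < kk) (hcut : ¬ π.1.r km kk)

include h hkmk hcut in
lemma pat_NNN {x y z : Fin n} (hkx : kk ≤ x) (hxy : x ≤ y) (hyz : y ≤ z)
    (hr : π.1.r x z) : π.1.r x y := by
  by_contra hn
  rcases eq_or_lt_of_le hxy with rfl | hxy'
  · exact hn (π.1.refl x)
  rcases eq_or_lt_of_le hyz with rfl | hyz'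
  · exact hn hr
  have hkmx : km < x := lt_of_lt_of_le hkmk hkx
  have h1 : π.1.r km x := by
    rcases nc_starstar h hkmx hxy' hyz' hr with h1 | h1
    · exact h1
    · exact absurd h1 hn
  have h2 : π.1.r kk x := by
    rcases eq_or_lt_of_le hkx with rfl | hkx'
    · exact π.1.refl _
    · rcases nc_starstar h hkx' hxy' hyz' hr with h2 | h2
      · exact h2
      · exact absurd h2 hn
  exact hcut (π.1.trans h1 (π.1.symm h2))

include h hkmk hcut in
lemma pat_YYY {x y z : Fin n} (hxy : x ≤ y) (hyz : y ≤ z) (hzk : z ≤ km)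
    (hr : π.1.r x z) : π.1.r x y := by
  by_contra hn
  rcases eq_or_lt_of_le hxy with rfl | hxy'
  · exact hn (π.1.refl x)
  rcases eq_or_lt_of_le hyz with rfl | hyz'
  · exact hn hr
  have h1 : π.1.r x km := by
    rcases eq_or_lt_of_le hzk with rfl | hzk'
    · exact hr
    · rcases nc_star h hxy' hyz' hzk' hr with h1 | h1
      · exact absurd h1 hn
      · exact h1
  have h2 : π.1.r x kk := by
    have hzkk : z < kk := lt_of_le_of_lt hzk hkmk
    rcases nc_star h hxy' hyz' hzkk hr with h2 | h2
    · exact absurd h2 hn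
    · exact h2
  exact hcut (π.1.trans (π.1.symm h1) h2)

include h hkmk hcut in
lemma pat_NNY {x y z : Fin n} (hzk : z ≤ km) (hkx : kk ≤ x) (hxy : x ≤ y)
    (hr : π.1.r x z) : π.1.r x y := by
  by_contra hn
  rcases eq_or_lt_of_le hxy with rfl | hxy'
  · exact hn (π.1.refl x)
  have hzx : z < x := lt_of_le_of_lt hzk (lt_of_lt_of_le hkmk hkx)
  have hzxr : π.1.r z x := π.1.symm hr
  have h1 : π.1.r z km := by
    rcases eq_or_lt_of_le hzk with rfl | hzk'
    · exact π.1.refl _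
    · have hkmx : km < x := lt_of_lt_of_le hkmk hkx
      rcases nc_star h hzk' hkmx hxy' hzxr with h1 | h1
      · exact h1
      · exact absurd (π.1.trans hr h1) hn
  have h2 : π.1.r z kk := by
    rcases eq_or_lt_of_le hkx with rfl | hkx'
    · exact hzxr
    · have hzkk : z < kk := lt_of_le_of_lt hzk hkmk
      rcases nc_star h hzkk hkx' hxy' hzxr with h2 | h2
      · exact h2
      · exact absurd (π.1.trans hr h2) hn
  exact hcut (π.1.trans (π.1.symm h1) h2)

include h hkmk hcut in
lemma pat_NYY {x y z : Fin n} (hxy : y ≤ z) (hzk : z ≤ km) (hkx : kk ≤ x)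
    (hr : π.1.r x z) : π.1.r x y := by
  by_contra hn
  rcases eq_or_lt_of_le hxy with rfl | hyz'
  · exact hn hr
  have hzx : z < x := lt_of_le_of_lt hzk (lt_of_lt_of_le hkmk hkx)
  have hzxr : π.1.r z x := π.1.symm hr
  have h1 : π.1.r z km := by
    rcases eq_or_lt_of_le hzk with rfl | hzk'
    · exact π.1.refl _
    · have hkmx : km < x := lt_of_lt_of_le hkmk hkx
      rcases nc_starstar h hyz' hzk' hkmx hzxr with h1 | h1
      · exact absurd (π.1.symm (π.1.trans h1 hzxr)) hn
      · exact h1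
  have h2 : π.1.r z kk := by
    rcases eq_or_lt_of_le hkx with rfl | hkx'
    · exact hzxr
    · have hzkk : z < kk := lt_of_le_of_lt hzk hkmk
      rcases nc_starstar h hyz' hzkk hkx' hzxr with h2 | h2
      · exact absurd (π.1.symm (π.1.trans h2 hzxr)) hn
      · exact h2
  exact hcut (π.1.trans (π.1.symm h1) h2)

end Aux

/-- If the full-lattice join of `π` with every non-crossing partition is itself
non-crossing, then `π` is a cyclic shift of an interval partition. -/
theorem cyclicInterval_of_fullJoin (n : ℕ) (hn : 1 ≤ n) (π : NC n)
    (h : ∀ ρ : NC n, IsNoncrossing (π.1 ⊔ ρ.1)) :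
    IsCyclicIntervalPartition π.1 := by
  classical
  by_cases htot : ∀ i : ℕ, ∀ hi : i + 1 < n,
      π.1.r ⟨i, Nat.lt_of_succ_lt hi⟩ ⟨i + 1, hi⟩
  · -- π relates all consecutive elements, hence is total, hence an interval partition.
    have key : ∀ j : ℕ, ∀ hj : j < n, π.1.r ⟨0, hn⟩ ⟨j, hj⟩ := by
      intro j
      induction j with
      | zero => intro hj; exact π.1.refl _
      | succ m ih =>
        intro hj
        exact π.1.trans (ih (Nat.lt_of_succ_lt hj)) (htot m hj)
    have total : ∀ x y : Fin n, π.1.r x y := by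
      intro x y
      have hx := key x.1 x.2
      have hy := key y.1 y.2
      simpa using π.1.trans (π.1.symm hx) hy
    exact ⟨⟨0, hn⟩, fun a b c _ _ _ => total _ _⟩
  · push_neg at htot
    obtain ⟨i, hi, hcut⟩ := htot
    set K : ℕ := i + 1 with hK
    have hKn : K < n := hi
    have hK1 : 1 ≤ K := Nat.le_add_left 1 i
    refine ⟨⟨K, hKn⟩, ?_⟩
    intro a b c hab hbc hr
    set km : Fin n := ⟨K - 1, by omega⟩ with hkm
    set kk : Fin n := ⟨K, hKn⟩ with hkk
    have hkmk : km < kk := by simp only [Fin.lt_def, hkm, hkk]; omega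
    have hcut' : ¬ π.1.r km kk := by
      have : km = ⟨i, Nat.lt_of_succ_lt hi⟩ := by
        apply Fin.ext; simp [hkm]; omega
      rw [this]; exact hcut
    have hab' : a.1 ≤ b.1 := hab
    have hbc' : b.1 ≤ c.1 := hbc
    have hxval : ∀ m : Fin n, (m + kk).1 = (m.1 + K) % n := by
      intro m; simp [Fin.add_def, hkk]
    change π.1.r (a + ⟨K, hKn⟩) (c + ⟨K, hKn⟩) at hr
    show π.1.r (a + ⟨K, hKn⟩) (b + ⟨K, hKn⟩)
    have ha2 := a.2; have hb2 := b.2; have hc2 := c.2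
    by_cases hA : a.1 + K < n
    · by_cases hB : b.1 + K < n
      · by_cases hC : c.1 + K < n
        · -- NNN
          refine pat_NNN h hkmk hcut' ?_ ?_ ?_ hr
          · show kk.1 ≤ _; rw [hxval a]; rw [Nat.mod_eq_of_lt hA]; first | (simp [hkk]; omega) | simp [hkk] | omega
          · show (a + kk).1 ≤ (b + kk).1
            rw [hxval a, hxval b, Nat.mod_eq_of_lt hA, Nat.mod_eq_of_lt hB]; omega
          · show (b + kk).1 ≤ (c + kk).1
            rw [hxval b, hxval c, Nat.mod_eq_of_lt hB, Nat.mod_eq_of_lt hC]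
            omega
        · -- NNY
          push_neg at hC
          have hCv : (c + kk).1 = c.1 + K - n := by
            rw [hxval c, Nat.mod_eq_sub_mod hC, Nat.mod_eq_of_lt (by omega)]
          refine pat_NNY h hkmk hcut' ?_ ?_ ?_ hr
          · show (c + kk).1 ≤ km.1; rw [hCv]; first | (simp [hkm]; omega) | simp [hkm] | omega
          · show kk.1 ≤ (a + kk).1; rw [hxval a, Nat.mod_eq_of_lt hA]; first | (simp [hkk]; omega) | simp [hkk] | omega
          · show (a + kk).1 ≤ (b + kk).1
            rw [hxval a, hxval b, Nat.mod_eq_of_lt hA, Nat.mod_eq_of_lt hB]; omega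
      · -- NYY
        push_neg at hB
        have hC : ¬ c.1 + K < n := by omega
        push_neg at hC
        have hBv : (b + kk).1 = b.1 + K - n := by
          rw [hxval b, Nat.mod_eq_sub_mod hB, Nat.mod_eq_of_lt (by omega)]
        have hCv : (c + kk).1 = c.1 + K - n := by
          rw [hxval c, Nat.mod_eq_sub_mod hC, Nat.mod_eq_of_lt (by omega)]
        refine pat_NYY h hkmk hcut' ?_ ?_ ?_ hr
        · show (b + kk).1 ≤ (c + kk).1; rw [hBv, hCv]; omega
        · show (c + kk).1 ≤ km.1; rw [hCv]; first | (simp [hkm]; omega) | simp [hkm] | omega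
        · show kk.1 ≤ (a + kk).1; rw [hxval a, Nat.mod_eq_of_lt hA]; first | (simp [hkk]; omega) | simp [hkk] | omega
    · -- YYY
      push_neg at hA
      have hB : n ≤ b.1 + K := by omega
      have hC : n ≤ c.1 + K := by omega
      have hAv : (a + kk).1 = a.1 + K - n := by
        rw [hxval a, Nat.mod_eq_sub_mod hA, Nat.mod_eq_of_lt (by omega)]
      have hBv : (b + kk).1 = b.1 + K - n := by
        rw [hxval b, Nat.mod_eq_sub_mod hB, Nat.mod_eq_of_lt (by omega)]
      have hCv : (c + kk).1 = c.1 + K - n := by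
        rw [hxval c, Nat.mod_eq_sub_mod hC, Nat.mod_eq_of_lt (by omega)]
      refine pat_YYY h hkmk hcut' ?_ ?_ ?_ hr
      · show (a + kk).1 ≤ (b + kk).1; rw [hAv, hBv]; omega
      · show (b + kk).1 ≤ (c + kk).1; rw [hBv, hCv]; omega
      · show (c + kk).1 ≤ km.1; rw [hCv]; first | (simp [hkm]; omega) | simp [hkm] | omega
end
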